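/- arXiv:1004.1947 — 2 statements merged into one kernel-verified Lean document; each statement's English description precedes it below -/
import Mathlib

section
/- Every evident branch is satisfiable; moreover every complete evident branch has a surjective model, and every finite evident branch has a finite model. -/
/-- Simple types of STT: the type `o` of truth values is `base 0`, sorts are `base (α+1)`. -/
inductive Ty : Type
  | base : ℕ → Ty
  | arr : Ty → Ty → Ty
  deriving DecidableEq

abbrev Ty.o : Ty := Ty.base 0
abbrev Ty.sort (α : ℕ) : Ty := Ty.base (α + 1)

/-- Terms of STT: variables, negation, primitive equality at every type, application,
lambda abstraction. -/
inductive Tm : Ty → Type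
  | var : ℕ → (σ : Ty) → Tm σ
  | neg : Tm (Ty.arr Ty.o Ty.o)
  | eq : (σ : Ty) → Tm (Ty.arr σ (Ty.arr σ Ty.o))
  | app : ∀ {σ τ : Ty}, Tm (Ty.arr σ τ) → Tm σ → Tm τ
  | lam : ℕ → (σ : Ty) → ∀ {τ : Ty}, Tm τ → Tm (Ty.arr σ τ)

def Tm.Not (s : Tm Ty.o) : Tm Ty.o := Tm.app Tm.neg s
def Tm.Eqn {σ : Ty} (s t : Tm σ) : Tm Ty.o := Tm.app (Tm.app (Tm.eq σ) s) t
def Tm.Diseq {σ : Ty} (s t : Tm σ) : Tm Ty.o := Tm.Not (Tm.Eqn s t)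

/-- Argument lists (spines): `Args σ ρ` turns a head of type `σ` into a term of type `ρ`. -/
inductive Args : Ty → Ty → Type
  | nil : ∀ {ρ}, Args ρ ρ
  | cons : ∀ {σ τ ρ}, Tm σ → Args τ ρ → Args (Ty.arr σ τ) ρ

def applyArgs : ∀ {σ ρ : Ty}, Tm σ → Args σ ρ → Tm ρ
  | _, _, s, Args.nil => s
  | _, _, s, Args.cons t a => applyArgs (Tm.app s t) a

def nfArgs (f : (σ : Ty) → Tm σ → Tm σ) : ∀ {σ ρ : Ty}, Args σ ρ → Args σ ρ
  | _, _, Args.nil => Args.nil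
  | _, _, Args.cons t a => Args.cons (f _ t) (nfArgs f a)

/-- Pairs of equi-typed argument lists `s₁ … sₙ` and `t₁ … tₙ`. -/
inductive Args2 : Ty → Ty → Type
  | nil : ∀ {ρ}, Args2 ρ ρ
  | cons : ∀ {σ τ ρ}, Tm σ → Tm σ → Args2 τ ρ → Args2 (Ty.arr σ τ) ρ

def Args2.left : ∀ {σ ρ}, Args2 σ ρ → Args σ ρ
  | _, _, Args2.nil => Args.nil
  | _, _, Args2.cons s _ p => Args.cons s (Args2.left p)

def Args2.right : ∀ {σ ρ}, Args2 σ ρ → Args σ ρ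
  | _, _, Args2.nil => Args.nil
  | _, _, Args2.cons _ t p => Args.cons t (Args2.right p)

/-- The list of disequations `sᵢ ≠ tᵢ` of a pair of argument lists. -/
def Args2.diseqs : ∀ {σ ρ}, Args2 σ ρ → List (Tm Ty.o)
  | _, _, Args2.nil => []
  | _, _, Args2.cons s t p => Tm.Diseq s t :: Args2.diseqs p

/-- Atomic heads: names (variables and the logical constants). -/
inductive Atomic : ∀ {σ : Ty}, Tm σ → Prop
  | var : ∀ n σ, Atomic (Tm.var n σ)
  | neg : Atomic Tm.neg
  | eq : ∀ σ, Atomic (Tm.eq σ)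

/-- Update a substitution at the name `(x, σ0)`. -/
def updS (θ : ℕ → (σ : Ty) → Option (Tm σ)) (x : ℕ) (σ0 : Ty) (t : Tm σ0) :
    ℕ → (σ : Ty) → Option (Tm σ) := fun n σ =>
  if h : n = x ∧ σ = σ0 then some (h.2.symm ▸ t) else θ n σ

/-- A normalization operator with an accompanying substitution operation,
satisfying N1–N3 and S1–S4. -/
structure NormOp : Type where
  nf : ∀ {σ : Ty}, Tm σ → Tm σ
  sub : (ℕ → (σ : Ty) → Option (Tm σ)) → ∀ {σ : Ty}, Tm σ → Tm σ
  n1 : ∀ {σ : Ty} (s : Tm σ), nf (nf s) = nf s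
  n2 : ∀ {σ τ : Ty} (s : Tm (Ty.arr σ τ)) (t : Tm σ), nf (Tm.app (nf s) t) = nf (Tm.app s t)
  n3 : ∀ {σ : Ty} {β : ℕ} (h : Tm σ), Atomic h → ∀ a : Args σ (Ty.base β),
      nf (applyArgs h a) = applyArgs h (nfArgs (fun _ s => nf s) a)
  s1 : ∀ θ (n : ℕ) (σ : Ty), sub θ (Tm.var n σ) = (θ n σ).getD (Tm.var n σ)
  s1neg : ∀ θ, sub θ Tm.neg = Tm.neg
  s1eq : ∀ θ (σ : Ty), sub θ (Tm.eq σ) = Tm.eq σ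
  s2 : ∀ θ {σ τ : Ty} (s : Tm (Ty.arr σ τ)) (t : Tm σ),
      sub θ (Tm.app s t) = Tm.app (sub θ s) (sub θ t)
  s3 : ∀ θ (x : ℕ) (σ : Ty) {τ : Ty} (s : Tm τ) (t : Tm σ),
      nf (Tm.app (sub θ (Tm.lam x σ s)) t) = nf (sub (updS θ x σ t) s)
  s4 : ∀ {σ : Ty} (s : Tm σ), nf (sub (fun _ _ => none) s) = nf s

/-- The evidence conditions for a branch `E`. -/
structure Evident (Ω : NormOp) (E : Set (Tm Ty.o)) : Prop where
  dn : ∀ s : Tm Ty.o, Tm.Not (Tm.Not s) ∈ E → s ∈ E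
  bq : ∀ s t : Tm Ty.o, Tm.Eqn s t ∈ E → (s ∈ E ∧ t ∈ E) ∨ (Tm.Not s ∈ E ∧ Tm.Not t ∈ E)
  be : ∀ s t : Tm Ty.o, Tm.Diseq s t ∈ E → (s ∈ E ∧ Tm.Not t ∈ E) ∨ (Tm.Not s ∈ E ∧ t ∈ E)
  fq : ∀ {σ τ : Ty} (s t : Tm (Ty.arr σ τ)), Tm.Eqn s t ∈ E → ∀ u : Tm σ, Ω.nf u = u →
      Tm.Eqn (Ω.nf (Tm.app s u)) (Ω.nf (Tm.app t u)) ∈ E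
  fe : ∀ {σ τ : Ty} (s t : Tm (Ty.arr σ τ)), Tm.Diseq s t ∈ E →
      ∃ x : ℕ, Tm.Diseq (Ω.nf (Tm.app s (Tm.var x σ))) (Ω.nf (Tm.app t (Tm.var x σ))) ∈ E
  mat : ∀ {σ : Ty} (x : ℕ) (p : Args2 σ Ty.o),
      applyArgs (Tm.var x σ) p.left ∈ E → Tm.Not (applyArgs (Tm.var x σ) p.right) ∈ E →
      ∃ d ∈ p.diseqs, d ∈ E
  dec : ∀ {σ : Ty} {α : ℕ} (x : ℕ) (p : Args2 σ (Ty.sort α)),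
      Tm.Diseq (applyArgs (Tm.var x σ) p.left) (applyArgs (Tm.var x σ) p.right) ∈ E →
      ∃ d ∈ p.diseqs, d ∈ E
  con : ∀ {α : ℕ} (s t u v : Tm (Ty.sort α)), Tm.Eqn s t ∈ E → Tm.Diseq u v ∈ E →
      (Tm.Diseq s u ∈ E ∧ Tm.Diseq t u ∈ E) ∨ (Tm.Diseq s v ∈ E ∧ Tm.Diseq t v ∈ E)

/-- A term `u` is discriminating in `E` if it occurs on one side of a disequation in `E`. -/
def Discriminating (E : Set (Tm Ty.o)) {σ : Ty} (u : Tm σ) : Prop :=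
  ∃ t : Tm σ, Tm.Diseq u t ∈ E ∨ Tm.Diseq t u ∈ E

/-- An `α`-discriminant: a maximal set of `α`-discriminating terms no two of which are
related by a disequation in `E`. -/
def IsDiscriminant (E : Set (Tm Ty.o)) (α : ℕ) (a : Set (Tm (Ty.sort α))) : Prop :=
  (∀ u ∈ a, Discriminating E u) ∧
  (∀ s ∈ a, ∀ t ∈ a, Tm.Diseq s t ∉ E) ∧
  (∀ b : Set (Tm (Ty.sort α)), a ⊆ b → (∀ u ∈ b, Discriminating E u) →
    (∀ s ∈ b, ∀ t ∈ b, Tm.Diseq s t ∉ E) → b = a)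

/-- `s # t`: the disequation `s ≠ t` or `t ≠ s` belongs to `E`. -/
def hashE (E : Set (Tm Ty.o)) {σ : Ty} (s t : Tm σ) : Prop :=
  Tm.Diseq s t ∈ E ∨ Tm.Diseq t s ∈ E

/-- Compatibility of two terms relative to an evident branch, by induction on types. -/
def compat (Ω : NormOp) (E : Set (Tm Ty.o)) : (σ : Ty) → Tm σ → Tm σ → Prop
  | Ty.base 0 => fun s t =>
      ¬(Ω.nf s ∈ E ∧ Tm.Not (Ω.nf t) ∈ E) ∧ ¬(Tm.Not (Ω.nf s) ∈ E ∧ Ω.nf t ∈ E)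
  | Ty.base (α + 1) => fun s t => ¬ hashE E (Ω.nf s) (Ω.nf t)
  | Ty.arr σ τ => fun s t => ∀ u v : Tm σ, compat Ω E σ u v →
      compat Ω E τ (Tm.app s u) (Tm.app t v)

/-- `ExistsPairHashNf Ω E p` holds if `[sᵢ] # [tᵢ]` for some position `i` of `p`. -/
def ExistsPairHashNf (Ω : NormOp) (E : Set (Tm Ty.o)) : ∀ {σ ρ : Ty}, Args2 σ ρ → Prop
  | _, _, Args2.nil => False
  | _, _, Args2.cons s t p => hashE E (Ω.nf s) (Ω.nf t) ∨ ExistsPairHashNf Ω E p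

/-- The value system of an evident branch `E`: at `o` the values are booleans, at a sort the
values are `α`-discriminants, and at function types the logical-relation clause is used. -/
def sem (Ω : NormOp) (E : Set (Tm Ty.o)) : (σ : Ty) → (A : Type) × (Tm σ → A → Prop)
  | Ty.base 0 => ⟨Bool, fun s b => if b then Tm.Not (Ω.nf s) ∉ E else Ω.nf s ∉ E⟩
  | Ty.base (α + 1) => ⟨Set (Tm (Ty.sort α)), fun s a =>
      IsDiscriminant E α a ∧ (Discriminating E (Ω.nf s) → Ω.nf s ∈ a)⟩
  | Ty.arr σ τ =>
      ⟨{x : (sem Ω E σ).1 // ∃ t : Tm σ, (sem Ω E σ).2 t x} → (sem Ω E τ).1,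
       fun s f => ∀ (t : Tm σ) (x : (sem Ω E σ).1) (h : (sem Ω E σ).2 t x),
         (sem Ω E τ).2 (Tm.app s t) (f ⟨x, t, h⟩)⟩

/-- An applicative structure for STT: nonempty domains, `D(στ)` a set of functions
`D(σ) → D(τ)` (extensionality), `D(o) = {0,1}`, together with an assignment for the
variables and logical values for `¬` and `=_σ`. -/
structure Struc : Type 1 where
  D : Ty → Type
  ap : ∀ {σ τ : Ty}, D (Ty.arr σ τ) → D σ → D τ
  ext : ∀ {σ τ : Ty} (f g : D (Ty.arr σ τ)), (∀ a : D σ, ap f a = ap g a) → f = g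
  ne : ∀ σ : Ty, Nonempty (D σ)
  I : ℕ → ∀ σ : Ty, D σ
  bo : D Ty.o ≃ Bool
  negv : D (Ty.arr Ty.o Ty.o)
  eqv : ∀ σ : Ty, D (Ty.arr σ (Ty.arr σ Ty.o))
  hneg : ∀ b : D Ty.o, ap negv b = bo.symm (!(bo b))
  heq : ∀ {σ : Ty} (a b : D σ), ap (ap (eqv σ) a) b = bo.symm true ↔ a = b

/-- Update the assignment of a structure at the name `(m, σ0)`. -/
def updD (M : Struc) (I : ℕ → ∀ σ, M.D σ) (m : ℕ) (σ0 : Ty) (a : M.D σ0) :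
    ℕ → ∀ σ, M.D σ := fun n σ =>
  if h : n = m ∧ σ = σ0 then (h.2.symm ▸ a) else I n σ

/-- The evaluation relation of a logical structure. -/
inductive Eval (M : Struc) : (ℕ → ∀ σ, M.D σ) → ∀ σ : Ty, Tm σ → M.D σ → Prop
  | var : ∀ (I : ℕ → ∀ σ, M.D σ) (n : ℕ) (σ : Ty), Eval M I σ (Tm.var n σ) (I n σ)
  | neg : ∀ I : ℕ → ∀ σ, M.D σ, Eval M I (Ty.arr Ty.o Ty.o) Tm.neg M.negv
  | eq : ∀ (I : ℕ → ∀ σ, M.D σ) (σ : Ty), Eval M I (Ty.arr σ (Ty.arr σ Ty.o)) (Tm.eq σ) (M.eqv σ)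
  | app : ∀ {I : ℕ → ∀ σ, M.D σ} {σ τ : Ty} {s : Tm (Ty.arr σ τ)} {t : Tm σ}
      {f : M.D (Ty.arr σ τ)} {a : M.D σ},
      Eval M I (Ty.arr σ τ) s f → Eval M I σ t a → Eval M I τ (Tm.app s t) (M.ap f a)
  | lam : ∀ {I : ℕ → ∀ σ, M.D σ} (n : ℕ) (σ : Ty) {τ : Ty} (s : Tm τ) (f : M.D (Ty.arr σ τ)),
      (∀ a : M.D σ, Eval M (updD M I n σ a) τ s (M.ap f a)) →
      Eval M I (Ty.arr σ τ) (Tm.lam n σ s) f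

/-- A logical interpretation: a logical structure whose evaluation is total. -/
structure Interp : Type 1 extends Struc where
  total : ∀ (σ : Ty) (s : Tm σ), ∃ a : toStruc.D σ, Eval toStruc toStruc.I σ s a

/-- `M` is a model of the set of formulas `E`. -/
def Satisfies (M : Interp) (E : Set (Tm Ty.o)) : Prop :=
  ∀ s ∈ E, Eval M.toStruc M.I Ty.o s (M.bo.symm true)

/-- A surjective interpretation: every value is denoted by some term. -/
def Surj (M : Interp) : Prop :=
  ∀ (σ : Ty) (a : M.D σ), ∃ s : Tm σ, Eval M.toStruc M.I σ s a

/-- A complete branch: contains `s` or `¬s` for every normal formula `s`. -/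
def CompleteBranch (Ω : NormOp) (E : Set (Tm Ty.o)) : Prop :=
  ∀ s : Tm Ty.o, Ω.nf s = s → s ∈ E ∨ Tm.Not s ∈ E

/-- The abstract consistency conditions on a set of branches `Γ`. -/
structure ACC (Ω : NormOp) (Γ : Set (Set (Tm Ty.o))) : Prop where
  dn : ∀ A ∈ Γ, ∀ s : Tm Ty.o, Tm.Not (Tm.Not s) ∈ A → insert s A ∈ Γ
  bq : ∀ A ∈ Γ, ∀ s t : Tm Ty.o, Tm.Eqn s t ∈ A →
      insert s (insert t A) ∈ Γ ∨ insert (Tm.Not s) (insert (Tm.Not t) A) ∈ Γ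
  be : ∀ A ∈ Γ, ∀ s t : Tm Ty.o, Tm.Diseq s t ∈ A →
      insert s (insert (Tm.Not t) A) ∈ Γ ∨ insert (Tm.Not s) (insert t A) ∈ Γ
  fq : ∀ A ∈ Γ, ∀ {σ τ : Ty} (s t : Tm (Ty.arr σ τ)), Tm.Eqn s t ∈ A → ∀ u : Tm σ, Ω.nf u = u →
      insert (Tm.Eqn (Ω.nf (Tm.app s u)) (Ω.nf (Tm.app t u))) A ∈ Γ
  fe : ∀ A ∈ Γ, ∀ {σ τ : Ty} (s t : Tm (Ty.arr σ τ)), Tm.Diseq s t ∈ A →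
      ∃ x : ℕ, insert (Tm.Diseq (Ω.nf (Tm.app s (Tm.var x σ))) (Ω.nf (Tm.app t (Tm.var x σ)))) A ∈ Γ
  mat : ∀ A ∈ Γ, ∀ {σ : Ty} (x : ℕ) (p : Args2 σ Ty.o),
      applyArgs (Tm.var x σ) p.left ∈ A → Tm.Not (applyArgs (Tm.var x σ) p.right) ∈ A →
      ∃ d ∈ p.diseqs, insert d A ∈ Γ
  dec : ∀ A ∈ Γ, ∀ {σ : Ty} {α : ℕ} (x : ℕ) (p : Args2 σ (Ty.sort α)),
      Tm.Diseq (applyArgs (Tm.var x σ) p.left) (applyArgs (Tm.var x σ) p.right) ∈ A →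
      ∃ d ∈ p.diseqs, insert d A ∈ Γ
  con : ∀ A ∈ Γ, ∀ {α : ℕ} (s t u v : Tm (Ty.sort α)), Tm.Eqn s t ∈ A → Tm.Diseq u v ∈ A →
      insert (Tm.Diseq s u) (insert (Tm.Diseq t u) A) ∈ Γ ∨
      insert (Tm.Diseq s v) (insert (Tm.Diseq t v) A) ∈ Γ

/-- A complete abstract consistency class. -/
def CompleteACC (Ω : NormOp) (Γ : Set (Set (Tm Ty.o))) : Prop :=
  ∀ A ∈ Γ, ∀ s : Tm Ty.o, Ω.nf s = s → insert s A ∈ Γ ∨ insert (Tm.Not s) A ∈ Γ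

/-- Free occurrence of the name `(x, μ)` in a term. -/
def FreeIn (x : ℕ) (μ : Ty) : ∀ {σ : Ty}, Tm σ → Prop
  | _, Tm.var n σ => x = n ∧ μ = σ
  | _, Tm.app s t => FreeIn x μ s ∨ FreeIn x μ t
  | _, Tm.lam n σ s => ¬(x = n ∧ μ = σ) ∧ FreeIn x μ s
  | _, _ => False

/-- A closed branch: contains `x` and `¬x` for a variable `x : o`, or `x ≠ x` at a sort. -/
def ClosedB (A : Set (Tm Ty.o)) : Prop :=
  (∃ x : ℕ, Tm.var x Ty.o ∈ A ∧ Tm.Not (Tm.var x Ty.o) ∈ A) ∨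
  (∃ (α : ℕ) (x : ℕ), Tm.Diseq (Tm.var x (Ty.sort α)) (Tm.var x (Ty.sort α)) ∈ A)

/-- Refutability in the cut-free tableau calculus `T` for STT, with the restrictions that
rules are applied only to non-closed branches and functional extensionality is applied only
once per disequation. -/
inductive Refutable (Ω : NormOp) : Set (Tm Ty.o) → Prop
  | closed : ∀ {A : Set (Tm Ty.o)}, ClosedB A → Refutable Ω A
  | dn : ∀ {A : Set (Tm Ty.o)} {s : Tm Ty.o}, ¬ClosedB A → Tm.Not (Tm.Not s) ∈ A →
      Refutable Ω (insert s A) → Refutable Ω A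
  | bq : ∀ {A : Set (Tm Ty.o)} (s t : Tm Ty.o), ¬ClosedB A → Tm.Eqn s t ∈ A →
      Refutable Ω (insert s (insert t A)) →
      Refutable Ω (insert (Tm.Not s) (insert (Tm.Not t) A)) → Refutable Ω A
  | be : ∀ {A : Set (Tm Ty.o)} (s t : Tm Ty.o), ¬ClosedB A → Tm.Diseq s t ∈ A →
      Refutable Ω (insert s (insert (Tm.Not t) A)) →
      Refutable Ω (insert (Tm.Not s) (insert t A)) → Refutable Ω A
  | fq : ∀ {A : Set (Tm Ty.o)} {σ τ : Ty} (s t : Tm (Ty.arr σ τ)) (u : Tm σ), ¬ClosedB A →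
      Tm.Eqn s t ∈ A → Ω.nf u = u →
      Refutable Ω (insert (Tm.Eqn (Ω.nf (Tm.app s u)) (Ω.nf (Tm.app t u))) A) → Refutable Ω A
  | fe : ∀ {A : Set (Tm Ty.o)} {σ τ : Ty} (s t : Tm (Ty.arr σ τ)) (x : ℕ), ¬ClosedB A →
      Tm.Diseq s t ∈ A → (∀ u ∈ A, ¬ FreeIn x σ u) →
      (¬∃ y : ℕ, Tm.Diseq (Ω.nf (Tm.app s (Tm.var y σ))) (Ω.nf (Tm.app t (Tm.var y σ))) ∈ A) →
      Refutable Ω (insert (Tm.Diseq (Ω.nf (Tm.app s (Tm.var x σ))) (Ω.nf (Tm.app t (Tm.var x σ)))) A) →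
      Refutable Ω A
  | mat : ∀ {A : Set (Tm Ty.o)} {σ : Ty} (x : ℕ) (p : Args2 σ Ty.o), ¬ClosedB A →
      applyArgs (Tm.var x σ) p.left ∈ A → Tm.Not (applyArgs (Tm.var x σ) p.right) ∈ A →
      (∀ d ∈ p.diseqs, Refutable Ω (insert d A)) → Refutable Ω A
  | dec : ∀ {A : Set (Tm Ty.o)} {σ : Ty} {α : ℕ} (x : ℕ) (p : Args2 σ (Ty.sort α)), ¬ClosedB A →
      Tm.Diseq (applyArgs (Tm.var x σ) p.left) (applyArgs (Tm.var x σ) p.right) ∈ A →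
      (∀ d ∈ p.diseqs, Refutable Ω (insert d A)) → Refutable Ω A
  | con : ∀ {A : Set (Tm Ty.o)} {α : ℕ} (s t u v : Tm (Ty.sort α)), ¬ClosedB A →
      Tm.Eqn s t ∈ A → Tm.Diseq u v ∈ A →
      Refutable Ω (insert (Tm.Diseq s u) (insert (Tm.Diseq t u) A)) →
      Refutable Ω (insert (Tm.Diseq s v) (insert (Tm.Diseq t v) A)) → Refutable Ω A
namespace ModelEx
open Classical

noncomputable section

variable (Ω : NormOp) (E : Set (Tm Ty.o))

/-- The semantic relation. -/
def R {σ : Ty} (s : Tm σ) (x : (sem Ω E σ).1) : Prop := (sem Ω E σ).2 s x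

lemma R_o (s : Tm Ty.o) (b : Bool) :
    R Ω E s b ↔ (if b then Tm.Not (Ω.nf s) ∉ E else Ω.nf s ∉ E) := Iff.rfl

lemma R_sort {α : ℕ} (s : Tm (Ty.sort α)) (a : Set (Tm (Ty.sort α))) :
    R Ω E s a ↔
      (IsDiscriminant E α a ∧ (Discriminating E (Ω.nf s) → Ω.nf s ∈ a)) := Iff.rfl

lemma R_arr {σ τ : Ty} (s : Tm (Ty.arr σ τ)) (f : (sem Ω E (Ty.arr σ τ)).1) :
    R Ω E s f ↔ ∀ (t : Tm σ) (x : (sem Ω E σ).1) (h : (sem Ω E σ).2 t x),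
      R Ω E (Tm.app s t) (f ⟨x, t, h⟩) := Iff.rfl

/-- nf computation lemmas -/
lemma nf_var_base (n β : ℕ) : Ω.nf (Tm.var n (Ty.base β)) = Tm.var n (Ty.base β) := by
  have := Ω.n3 (Tm.var n (Ty.base β)) (Atomic.var n _) (Args.nil (ρ := Ty.base β))
  simpa [applyArgs, nfArgs] using this

lemma nf_Not (s : Tm Ty.o) : Ω.nf (Tm.Not s) = Tm.Not (Ω.nf s) := by
  have := Ω.n3 (β := 0) Tm.neg Atomic.neg (Args.cons s Args.nil)
  simpa [applyArgs, nfArgs, Tm.Not] using this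

lemma nf_Eqn {σ : Ty} (s t : Tm σ) : Ω.nf (Tm.Eqn s t) = Tm.Eqn (Ω.nf s) (Ω.nf t) := by
  have := Ω.n3 (β := 0) (Tm.eq σ) (Atomic.eq σ) (Args.cons s (Args.cons t Args.nil))
  simpa [applyArgs, nfArgs, Tm.Eqn] using this

lemma nf_Diseq {σ : Ty} (s t : Tm σ) :
    Ω.nf (Tm.Diseq s t) = Tm.Diseq (Ω.nf s) (Ω.nf t) := by
  rw [Tm.Diseq, nf_Not, nf_Eqn]; rfl

lemma nf_app_nf {σ τ : Ty} (s : Tm (Ty.arr σ τ)) (t : Tm σ) :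
    Ω.nf (Tm.app (Ω.nf s) t) = Ω.nf (Tm.app s t) := Ω.n2 s t

/-- R only depends on the normal form. -/
lemma R_nf_congr : ∀ (σ : Ty) (s t : Tm σ), Ω.nf s = Ω.nf t →
    ∀ x : (sem Ω E σ).1, (R Ω E s x ↔ R Ω E t x) := by
  intro σ
  induction σ with
  | base n =>
    cases n with
    | zero => intro s t h x; exact (R_o Ω E s x).trans (by rw [h]; exact (R_o Ω E t x).symm)
    | succ α => intro s t h x; exact (R_sort Ω E s x).trans (by rw [h]; exact (R_sort Ω E t x).symm)
  | arr σ τ ih1 ih2 =>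
    intro s t h f
    have key : ∀ u : Tm σ, Ω.nf (Tm.app s u) = Ω.nf (Tm.app t u) := by
      intro u
      rw [← Ω.n2 s u, ← Ω.n2 t u, h]
    constructor
    · intro hR u x hx
      exact (ih2 _ _ (key u) _).mp (hR u x hx)
    · intro hR u x hx
      exact (ih2 _ _ (key u) _).mpr (hR u x hx)

lemma R_nf {σ : Ty} (s : Tm σ) (x : (sem Ω E σ).1) :
    R Ω E (Ω.nf s) x ↔ R Ω E s x :=
  R_nf_congr Ω E σ _ _ (Ω.n1 s) x

end
end ModelEx
namespace ModelEx2
open ModelEx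
open Classical

noncomputable section

variable (Ω : NormOp) (E : Set (Tm Ty.o))

/-- snoc for spines -/
def Args.snoc : ∀ {σ α β : Ty}, Args σ (Ty.arr α β) → Tm α → Args σ β
  | _, _, _, Args.nil, t => Args.cons t Args.nil
  | _, _, _, Args.cons u a, t => Args.cons u (Args.snoc a t)

theorem applyArgs_snoc : ∀ {σ α β : Ty} (s : Tm σ) (a : Args σ (Ty.arr α β)) (t : Tm α),
    applyArgs s (Args.snoc a t) = Tm.app (applyArgs s a) t
  | _, _, _, s, Args.nil, t => rfl
  | _, _, _, s, Args.cons u a, t => applyArgs_snoc (Tm.app s u) a t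

/-- Spines of semantic values. -/
inductive VArgs : Ty → Ty → Type
  | nil : ∀ {ρ}, VArgs ρ ρ
  | cons : ∀ {σ τ ρ}, (sem Ω E σ).1 → VArgs τ ρ → VArgs (Ty.arr σ τ) ρ

def VArgs.snoc : ∀ {σ α β : Ty}, VArgs Ω E σ (Ty.arr α β) → (sem Ω E α).1 → VArgs Ω E σ β
  | _, _, _, VArgs.nil, v => VArgs.cons v VArgs.nil
  | _, _, _, VArgs.cons u q, v => VArgs.cons u (VArgs.snoc q v)

/-- A term spine realizes a value spine. -/
inductive SR : ∀ {σ ρ : Ty}, Args σ ρ → VArgs Ω E σ ρ → Prop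
  | nil : ∀ {ρ}, SR (Args.nil (ρ := ρ)) VArgs.nil
  | cons : ∀ {σ τ ρ} {t : Tm σ} {v : (sem Ω E σ).1} {p : Args τ ρ} {q : VArgs Ω E τ ρ},
      R Ω E t v → SR p q → SR (Args.cons t p) (VArgs.cons v q)

theorem SR_snoc : ∀ {σ α β : Ty} {p : Args σ (Ty.arr α β)} {q : VArgs Ω E σ (Ty.arr α β)}
    {t : Tm α} {v : (sem Ω E α).1},
    SR Ω E p q → R Ω E t v → SR Ω E (Args.snoc p t) (VArgs.snoc Ω E q v)
  | _, _, _, Args.nil, _, _, _, h, hv => by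
      cases h
      exact SR.cons hv SR.nil
  | _, _, _, Args.cons u p, _, _, _, h, hv => by
      cases h with
      | cons h1 h2 => exact SR.cons h1 (SR_snoc h2 hv)

/-- Zorn: every admissible set of discriminating terms extends to a discriminant. -/
lemma exists_discriminant {α : ℕ} (S : Set (Tm (Ty.sort α)))
    (h1 : ∀ u ∈ S, Discriminating E u)
    (h2 : ∀ s ∈ S, ∀ t ∈ S, Tm.Diseq s t ∉ E) :
    ∃ a : Set (Tm (Ty.sort α)), IsDiscriminant E α a ∧ S ⊆ a := by
  set 𝒮 : Set (Set (Tm (Ty.sort α))) :=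
    {b | (∀ u ∈ b, Discriminating E u) ∧ (∀ s ∈ b, ∀ t ∈ b, Tm.Diseq s t ∉ E)} with h𝒮
  have hchain : ∀ c ⊆ 𝒮, IsChain (· ⊆ ·) c → ∀ y ∈ c, ∃ ub ∈ 𝒮, ∀ s ∈ c, s ⊆ ub := by
    intro c hc hch y hy
    refine ⟨⋃₀ c, ⟨?_, ?_⟩, fun s hs => Set.subset_sUnion_of_mem hs⟩
    · rintro u ⟨b, hb, hub⟩
      exact (hc hb).1 u hub
    · rintro s ⟨b1, hb1, hs⟩ t ⟨b2, hb2, ht⟩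
      rcases hch.total hb1 hb2 with h | h
      · exact (hc hb2).2 s (h hs) t ht
      · exact (hc hb1).2 s hs t (h ht)
  obtain ⟨m, hSm, hm⟩ := zorn_subset_nonempty 𝒮 (fun c hc hch hne => by
      obtain ⟨y, hy⟩ := hne
      exact hchain c hc hch y hy) S ⟨h1, h2⟩
  refine ⟨m, ⟨hm.prop.1, hm.prop.2, ?_⟩, hSm⟩
  intro b hmb hb1 hb2
  exact Set.Subset.antisymm (hm.2 ⟨hb1, hb2⟩ hmb) hmb

end
end ModelEx2
namespace ModelEx3
open ModelEx ModelEx2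
open Classical

noncomputable section

variable (Ω : NormOp) (E : Set (Tm Ty.o))

def tsize : Ty → ℕ
  | Ty.base _ => 1
  | Ty.arr a b => tsize a + tsize b + 1

/-- `D1 σ`: two terms sharing a value are never E-disequal (after normalization). -/
def D1 (σ : Ty) : Prop := ∀ (s t : Tm σ) (v : (sem Ω E σ).1),
  R Ω E s v → R Ω E t v → Tm.Diseq (Ω.nf s) (Ω.nf t) ∉ E

/-- `VV σ`: every variable of type `σ` has a value. -/
def VV (σ : Ty) : Prop := ∀ n : ℕ, ∃ v : (sem Ω E σ).1, R Ω E (Tm.var n σ) v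

lemma SR_cons_inv {σ τ ρ : Ty} {p : Args (Ty.arr σ τ) ρ} {v : (sem Ω E σ).1}
    {q : VArgs Ω E τ ρ} (h : SR Ω E p (VArgs.cons v q)) :
    ∃ (t : Tm σ) (pp : Args τ ρ), p = Args.cons t pp ∧ R Ω E t v ∧ SR Ω E pp q := by
  cases h with
  | cons h1 h2 => exact ⟨_, _, rfl, h1, h2⟩

theorem zipLem : ∀ {σ0 ρ : Ty} (q : VArgs Ω E σ0 ρ) (p p' : Args σ0 ρ),
    SR Ω E p q → SR Ω E p' q →
    ∃ p2 : Args2 σ0 ρ, p2.left = nfArgs (fun _ s => Ω.nf s) p ∧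
      p2.right = nfArgs (fun _ s => Ω.nf s) p' ∧
      ∀ d ∈ p2.diseqs, ∃ (μ : Ty) (s t : Tm μ) (v : (sem Ω E μ).1),
        tsize μ < tsize σ0 ∧ d = Tm.Diseq (Ω.nf s) (Ω.nf t) ∧ R Ω E s v ∧ R Ω E t v
  | _, _, VArgs.nil, _, _, h, h' => by
      cases h; cases h'
      exact ⟨Args2.nil, rfl, rfl, by simp [Args2.diseqs]⟩
  | _, _, @VArgs.cons _ _ μ τ ρ v q, pc, pc', h, h' => by
      obtain ⟨s, p, rfl, h1, h2⟩ := SR_cons_inv Ω E h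
      obtain ⟨t, p', rfl, h1', h2'⟩ := SR_cons_inv Ω E h'
      obtain ⟨p2, hl, hr, hd⟩ := zipLem q p p' h2 h2'
      refine ⟨Args2.cons (Ω.nf s) (Ω.nf t) p2, ?_, ?_, ?_⟩
      · simp [Args2.left, nfArgs, hl]
      · simp [Args2.right, nfArgs, hr]
      · intro d hdmem
        simp only [Args2.diseqs, List.mem_cons] at hdmem
        rcases hdmem with rfl | hdmem
        · exact ⟨μ, s, t, v, by simp [tsize], rfl, h1, h1'⟩
        · obtain ⟨μ', s', t', v', hsz, hdq, hs', ht'⟩ := hd d hdmem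
          refine ⟨μ', s', t', v', by simp [tsize]; omega, hdq, hs', ht'⟩

theorem Wlem (hE : Evident Ω E) (σ0 : Ty)
    (hIH : ∀ μ : Ty, tsize μ < tsize σ0 → D1 Ω E μ) :
    ∀ (ρ : Ty) (q : VArgs Ω E σ0 ρ) (n : ℕ),
      ∃ d : (sem Ω E ρ).1, ∀ p : Args σ0 ρ, SR Ω E p q →
        R Ω E (applyArgs (Tm.var n σ0) p) d := by
  intro ρ
  induction ρ with
  | base b =>
    intro q n
    have hnfA : ∀ p : Args σ0 (Ty.base b),
        applyArgs (Tm.var n σ0) (nfArgs (fun _ s => Ω.nf s) p)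
          = Ω.nf (applyArgs (Tm.var n σ0) p) :=
      fun p => (Ω.n3 (Tm.var n σ0) (Atomic.var n σ0) p).symm
    cases b with
    | zero =>
      have conflict : ∀ p p' : Args σ0 (Ty.base 0), SR Ω E p q → SR Ω E p' q →
          Ω.nf (applyArgs (Tm.var n σ0) p) ∈ E →
          Tm.Not (Ω.nf (applyArgs (Tm.var n σ0) p')) ∈ E → False := by
        intro p p' h h' hin hnin
        obtain ⟨p2, hl, hr, hd⟩ := zipLem Ω E q p p' h h'
        have hL : applyArgs (Tm.var n σ0) p2.left ∈ E := by
          rw [hl, hnfA]; exact hin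
        have hR' : Tm.Not (applyArgs (Tm.var n σ0) p2.right) ∈ E := by
          rw [hr, hnfA]; exact hnin
        obtain ⟨dq, hdq, hdqE⟩ := hE.mat n p2 hL hR'
        obtain ⟨μ, s, t, v, hsz, rfl, hs, ht⟩ := hd dq hdq
        exact hIH μ hsz s t v hs ht hdqE
      by_cases hex : ∃ p : Args σ0 (Ty.base 0), SR Ω E p q ∧
          Ω.nf (applyArgs (Tm.var n σ0) p) ∈ E
      · refine ⟨true, fun p hp => ?_⟩
        obtain ⟨p0, hp0, hp0E⟩ := hex
        have : Tm.Not (Ω.nf (applyArgs (Tm.var n σ0) p)) ∉ E :=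
          fun hc => conflict p0 p hp0 hp hp0E hc
        exact (R_o Ω E _ true).mpr (by simpa using this)
      · refine ⟨false, fun p hp => ?_⟩
        have : Ω.nf (applyArgs (Tm.var n σ0) p) ∉ E := fun hc => hex ⟨p, hp, hc⟩
        exact (R_o Ω E _ false).mpr (by simpa using this)
    | succ α =>
      set S : Set (Tm (Ty.sort α)) :=
        {u | ∃ p : Args σ0 (Ty.sort α), SR Ω E p q ∧
          u = Ω.nf (applyArgs (Tm.var n σ0) p) ∧ Discriminating E u} with hS
      have h1 : ∀ u ∈ S, Discriminating E u := by
        rintro u ⟨p, hp, rfl, hdisc⟩; exact hdisc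
      have h2 : ∀ s ∈ S, ∀ t ∈ S, Tm.Diseq s t ∉ E := by
        rintro s ⟨p, hp, rfl, _⟩ t ⟨p', hp', rfl, _⟩ hdq
        obtain ⟨p2, hl, hr, hd⟩ := zipLem Ω E q p p' hp hp'
        have hdq2 : Tm.Diseq (applyArgs (Tm.var n σ0) p2.left)
            (applyArgs (Tm.var n σ0) p2.right) ∈ E := by
          rw [hl, hr, hnfA, hnfA]; exact hdq
        obtain ⟨dq, hdqm, hdqE⟩ := hE.dec n p2 hdq2
        obtain ⟨μ, s', t', v, hsz, rfl, hs', ht'⟩ := hd dq hdqm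
        exact hIH μ hsz s' t' v hs' ht' hdqE
      obtain ⟨a, ha, hSa⟩ := exists_discriminant E S h1 h2
      refine ⟨a, fun p hp => (R_sort Ω E _ a).mpr ⟨ha, fun hdisc => ?_⟩⟩
      exact hSa ⟨p, hp, rfl, hdisc⟩
  | arr α β ih1 ih2 =>
    intro q n
    refine ⟨fun w => Classical.choose (ih2 (VArgs.snoc Ω E q w.1) n), fun p hp => ?_⟩
    intro t x hx
    have hspec := Classical.choose_spec (ih2 (VArgs.snoc Ω E q x) n)
    have := hspec (Args.snoc p t) (SR_snoc Ω E hp hx)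
    rw [applyArgs_snoc] at this
    exact this

theorem pkg (hE : Evident Ω E) :
    ∀ (k : ℕ) (σ : Ty), tsize σ = k → D1 Ω E σ ∧ VV Ω E σ := by
  intro k
  induction k using Nat.strong_induction_on with
  | _ k ih =>
  intro σ hk
  have hIH : ∀ μ, tsize μ < k → D1 Ω E μ ∧ VV Ω E μ := fun μ h => ih _ h μ rfl
  subst hk
  have hVV : VV Ω E σ := by
    intro m
    obtain ⟨d, hd⟩ := Wlem Ω E hE σ (fun μ h => (hIH μ h).1) σ VArgs.nil m
    exact ⟨d, by simpa [applyArgs] using hd Args.nil SR.nil⟩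
  refine ⟨?_, hVV⟩
  cases σ with
  | base b =>
    cases b with
    | zero =>
      intro s t v hs ht hdq
      have hs' := (R_o Ω E s v).mp hs
      have ht' := (R_o Ω E t v).mp ht
      rcases hE.be _ _ hdq with ⟨h1, h2⟩ | ⟨h1, h2⟩ <;> cases v <;> simp_all
    | succ α =>
      intro s t v hs ht hdq
      obtain ⟨⟨_, hfree, _⟩, hmem⟩ := (R_sort Ω E s v).mp hs
      obtain ⟨_, hmem'⟩ := (R_sort Ω E t v).mp ht
      exact hfree _ (hmem ⟨Ω.nf t, Or.inl hdq⟩) _ (hmem' ⟨Ω.nf s, Or.inr hdq⟩) hdq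
  | arr σ1 τ =>
    intro s t v hs ht hdq
    obtain ⟨x', hx'⟩ := hE.fe (Ω.nf s) (Ω.nf t) hdq
    rw [Ω.n2, Ω.n2] at hx'
    obtain ⟨ξ, hξ⟩ := (hIH σ1 (by simp [tsize])).2 x'
    have h1 := hs (Tm.var x' σ1) ξ hξ
    have h2 := ht (Tm.var x' σ1) ξ hξ
    exact (hIH τ (by simp [tsize])).1 _ _ _ h1 h2 hx'

theorem D1all (hE : Evident Ω E) (σ : Ty) : D1 Ω E σ := (pkg Ω E hE _ σ rfl).1
theorem VVall (hE : Evident Ω E) (σ : Ty) : VV Ω E σ := (pkg Ω E hE _ σ rfl).2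

end
end ModelEx3
namespace ModelEx4
open ModelEx ModelEx2 ModelEx3
open Classical

noncomputable section

variable (Ω : NormOp) (E : Set (Tm Ty.o))

/-- Terms E-equated (after normalization) share all values. -/
theorem Eq2 (hE : Evident Ω E) : ∀ (σ : Ty) (s t : Tm σ) (x y : (sem Ω E σ).1),
    Tm.Eqn (Ω.nf s) (Ω.nf t) ∈ E → R Ω E s x → R Ω E t y → x = y := by
  intro σ
  induction σ with
  | base b =>
    cases b with
    | zero =>
      intro s t x y heq hx hy
      have hx' := (R_o Ω E s x).mp hx
      have hy' := (R_o Ω E t y).mp hy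
      rcases hE.bq _ _ heq with ⟨h1, h2⟩ | ⟨h1, h2⟩ <;> cases x <;> cases y <;> simp_all <;> rfl
    | succ α =>
      intro s t a b heq ha hb
      change Set (Tm (Ty.sort α)) at a b
      obtain ⟨hdA, hmemA⟩ := (R_sort Ω E s a).mp ha
      obtain ⟨hdB, hmemB⟩ := (R_sort Ω E t b).mp hb
      have hfree : ∀ u ∈ a ∪ b, ∀ v ∈ a ∪ b, Tm.Diseq u v ∉ E := by
        rintro u (hu | hu) v (hv | hv) hdq
        · exact hdA.2.1 u hu v hv hdq
        · rcases hE.con (Ω.nf s) (Ω.nf t) u v heq hdq with ⟨c1, c2⟩ | ⟨c1, c2⟩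
          · exact hdA.2.1 _ (hmemA ⟨u, Or.inl c1⟩) _ hu c1
          · exact hdB.2.1 _ (hmemB ⟨v, Or.inl c2⟩) _ hv c2
        · rcases hE.con (Ω.nf s) (Ω.nf t) u v heq hdq with ⟨c1, c2⟩ | ⟨c1, c2⟩
          · exact hdB.2.1 _ (hmemB ⟨u, Or.inl c2⟩) _ hu c2
          · exact hdA.2.1 _ (hmemA ⟨v, Or.inl c1⟩) _ hv c1
        · exact hdB.2.1 u hu v hv hdq
      have hdisc : ∀ u ∈ a ∪ b, Discriminating E u := by
        rintro u (hu | hu)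
        exacts [hdA.1 u hu, hdB.1 u hu]
      have e1 : a ∪ b = a := hdA.2.2 _ Set.subset_union_left hdisc hfree
      have e2 : a ∪ b = b := hdB.2.2 _ Set.subset_union_right hdisc hfree
      exact e1.symm.trans e2
  | arr σ1 τ ih1 ih2 =>
    intro s t f g heq hf hg
    funext w
    obtain ⟨v, hv⟩ := w.2
    have hfq := hE.fq (Ω.nf s) (Ω.nf t) heq (Ω.nf v) (Ω.n1 v)
    rw [Ω.n2, Ω.n2] at hfq
    have hv' : R Ω E (Ω.nf v) w.1 := (R_nf Ω E v w.1).mpr hv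
    have h1 := hf (Ω.nf v) w.1 hv'
    have h2 := hg (Ω.nf v) w.1 hv'
    have hw : (⟨w.1, Ω.nf v, hv'⟩ :
        {x : (sem Ω E σ1).1 // ∃ u : Tm σ1, (sem Ω E σ1).2 u x}) = w := Subtype.ext rfl
    rw [← hw]
    exact ih2 (Tm.app s (Ω.nf v)) (Tm.app t (Ω.nf v)) _ _ hfq h1 h2

end
end ModelEx4
namespace ModelEx5
open ModelEx ModelEx2 ModelEx3 ModelEx4
open Classical

noncomputable section

variable (Ω : NormOp) (E : Set (Tm Ty.o))

/-- The domains: semantic values witnessed by a term. -/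
def Dom (σ : Ty) : Type := {x : (sem Ω E σ).1 // ∃ t : Tm σ, (sem Ω E σ).2 t x}

def apD {σ τ : Ty} (f : Dom Ω E (Ty.arr σ τ)) (a : Dom Ω E σ) : Dom Ω E τ :=
  ⟨f.1 ⟨a.1, a.2⟩, by
    obtain ⟨s, hs⟩ := f.2
    obtain ⟨t, ht⟩ := a.2
    exact ⟨Tm.app s t, hs t a.1 ht⟩⟩

lemma exists_R_true (hE : Evident Ω E) : ∃ s : Tm Ty.o, R Ω E s true := by
  by_contra h
  push_neg at h
  have hall : ∀ s : Tm Ty.o, Tm.Not (Ω.nf s) ∈ E := by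
    intro s
    have := h s
    rw [R_o] at this
    simpa using this
  have h0 : Tm.Not (Tm.var 0 Ty.o) ∈ E := by
    have := hall (Tm.var 0 Ty.o); rwa [nf_var_base] at this
  have h1 : Tm.Not (Tm.Not (Tm.var 0 Ty.o)) ∈ E := by
    have := hall (Tm.Not (Tm.var 0 Ty.o))
    rwa [nf_Not, nf_var_base] at this
  have h2 : Tm.var 0 Ty.o ∈ E := hE.dn _ h1
  have := hE.mat 0 (Args2.nil (ρ := Ty.o)) h2 h0
  simpa [Args2.diseqs] using this

lemma exists_R_false (hE : Evident Ω E) : ∃ s : Tm Ty.o, R Ω E s false := by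
  by_contra h
  push_neg at h
  have hall : ∀ s : Tm Ty.o, Ω.nf s ∈ E := by
    intro s
    have := h s
    rw [R_o] at this
    simpa using this
  have h2 : Tm.var 0 Ty.o ∈ E := by
    have := hall (Tm.var 0 Ty.o); rwa [nf_var_base] at this
  have h0 : Tm.Not (Tm.var 0 Ty.o) ∈ E := by
    have := hall (Tm.Not (Tm.var 0 Ty.o))
    rwa [nf_Not, nf_var_base] at this
  have := hE.mat 0 (Args2.nil (ρ := Ty.o)) h2 h0
  simpa [Args2.diseqs] using this

def negF : (sem Ω E (Ty.arr Ty.o Ty.o)).1 := fun b => !b.1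

lemma R_negF (hE : Evident Ω E) : R Ω E Tm.neg (negF Ω E) := by
  intro t x hx
  show R Ω E (Tm.Not t) (!x)
  have hx' := (R_o Ω E t x).mp hx
  cases x with
  | true =>
    refine (R_o Ω E _ false).mpr ?_
    rw [nf_Not]
    simpa using hx'
  | false =>
    refine (R_o Ω E _ true).mpr ?_
    rw [nf_Not]
    simp only [if_true, Bool.not_false]
    intro hc
    exact (by simpa using hx' : Ω.nf t ∉ E) (hE.dn _ hc)

def eqF (σ : Ty) : (sem Ω E (Ty.arr σ (Ty.arr σ Ty.o))).1 :=
  fun a b => if a.1 = b.1 then true else false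

lemma R_eqF (hE : Evident Ω E) (σ : Ty) : R Ω E (Tm.eq σ) (eqF Ω E σ) := by
  intro t x hx u y hy
  show R Ω E (Tm.Eqn t u) (if x = y then true else false)
  by_cases h : x = y
  · rw [show (if x = y then true else false : (sem Ω E Ty.o).1) = true from if_pos h]
    refine (R_o Ω E _ true).mpr ?_
    simp only [if_true]
    rw [show Tm.Not (Ω.nf (Tm.Eqn t u)) = Ω.nf (Tm.Diseq t u) by rw [Tm.Diseq, nf_Not], nf_Diseq]
    exact D1all Ω E hE σ t u x hx (h ▸ hy)
  · rw [show (if x = y then true else false : (sem Ω E Ty.o).1) = false from if_neg h]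
    refine (R_o Ω E _ false).mpr ?_
    simp only [if_false, Bool.false_eq_true]
    rw [nf_Eqn]
    intro hc
    exact h (Eq2 Ω E hE σ t u x y hc hx hy)

def Mstr (hE : Evident Ω E) : Struc where
  D := Dom Ω E
  ap := apD Ω E
  ext := by
    intro σ τ f g h
    apply Subtype.ext
    funext w
    exact congrArg Subtype.val (h w)
  ne := fun σ => (VVall Ω E hE σ 0).elim fun v hv => ⟨⟨v, ⟨Tm.var 0 σ, hv⟩⟩⟩
  I := fun n σ => ⟨Classical.choose (VVall Ω E hE σ n),
    Tm.var n σ, Classical.choose_spec (VVall Ω E hE σ n)⟩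
  bo := {
    toFun := fun d => d.1
    invFun := fun b => if b then ⟨true, exists_R_true Ω E hE⟩
      else ⟨false, exists_R_false Ω E hE⟩
    left_inv := by
      intro d
      cases h : d.1 <;> simp [h] <;> exact Subtype.ext (by simp [h]; rfl)
    right_inv := by intro b; cases b <;> simp }
  negv := ⟨negF Ω E, Tm.neg, R_negF Ω E hE⟩
  eqv := fun σ => ⟨eqF Ω E σ, Tm.eq σ, R_eqF Ω E hE σ⟩
  hneg := by
    intro b
    apply Subtype.ext
    show negF Ω E ⟨b.1, b.2⟩ = ((if (!b.1) = true then ⟨true, exists_R_true Ω E hE⟩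
      else ⟨false, exists_R_false Ω E hE⟩ : Dom Ω E Ty.o)).1
    simp only [negF]
    cases h : b.1 <;> simp [h] <;> rfl
  heq := by
    intro σ a b
    refine Subtype.ext_iff.trans (Iff.trans ?_ Subtype.ext_iff.symm)
    show (if a.1 = b.1 then true else false) = true ↔ a.1 = b.1
    by_cases h : a.1 = b.1 <;> simp [h]

end
end ModelEx5
namespace ModelEx6
open ModelEx ModelEx2 ModelEx3 ModelEx4 ModelEx5
open Classical

noncomputable section

variable (Ω : NormOp) (E : Set (Tm Ty.o)) (hE : Evident Ω E)

def Compat (θ : ℕ → (σ : Ty) → Option (Tm σ)) (I' : ℕ → ∀ σ, Dom Ω E σ) : Prop :=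
  ∀ (n : ℕ) (μ : Ty), R Ω E ((θ n μ).getD (Tm.var n μ)) (I' n μ).1

lemma compat_upd {θ : ℕ → (σ : Ty) → Option (Tm σ)} {I' : ℕ → ∀ σ, Dom Ω E σ}
    (hθ : Compat Ω E θ I') (x : ℕ) (σ0 : Ty) (t0 : Tm σ0) (a : Dom Ω E σ0)
    (ha : R Ω E t0 a.1) :
    Compat Ω E (updS θ x σ0 t0) (updD (Mstr Ω E hE) I' x σ0 a) := by
  intro n μ
  unfold updS updD
  by_cases h : n = x ∧ μ = σ0
  · obtain ⟨rfl, rfl⟩ := h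
    have e2 : (if h : n = n ∧ μ = μ then (h.2.symm ▸ a : Dom Ω E μ) else I' n μ) = a :=
      dif_pos ⟨rfl, rfl⟩
    have e1 : (if h : n = n ∧ μ = μ then some (h.2.symm ▸ t0) else θ n μ) = some t0 :=
      dif_pos ⟨rfl, rfl⟩
    refine (congrArg (fun z : Dom Ω E μ => R Ω E _ z.1) e2).mpr ?_
    exact (congrArg (fun o => R Ω E (Option.getD o (Tm.var n μ)) a.1) e1).mpr ha
  · have e2 : (if h : n = x ∧ μ = σ0 then (h.2.symm ▸ a : Dom Ω E μ) else I' n μ) = I' n μ :=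
      dif_neg h
    have e1 : (if h : n = x ∧ μ = σ0 then some (h.2.symm ▸ t0) else θ n μ) = θ n μ := dif_neg h
    refine (congrArg (fun z : Dom Ω E μ => R Ω E _ z.1) e2).mpr ?_
    exact (congrArg (fun o => R Ω E (Option.getD o (Tm.var n μ)) (I' n μ).1) e1).mpr (hθ n μ)

theorem subst_total : ∀ {σ : Ty} (s : Tm σ) (I' : ℕ → ∀ μ, Dom Ω E μ),
    ∃ d : Dom Ω E σ, Eval (Mstr Ω E hE) I' σ s d ∧
      ∀ θ, Compat Ω E θ I' → R Ω E (Ω.sub θ s) d.1 := by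
  intro σ s
  induction s with
  | var n σ =>
    intro I'
    refine ⟨I' n σ, @Eval.var (Mstr Ω E hE) I' n σ, fun θ hθ => ?_⟩
    rw [Ω.s1]; exact hθ n σ
  | neg =>
    intro I'
    refine ⟨(Mstr Ω E hE).negv, @Eval.neg (Mstr Ω E hE) I', fun θ hθ => ?_⟩
    rw [Ω.s1neg]; exact R_negF Ω E hE
  | eq σ =>
    intro I'
    refine ⟨(Mstr Ω E hE).eqv σ, @Eval.eq (Mstr Ω E hE) I' σ, fun θ hθ => ?_⟩
    rw [Ω.s1eq]; exact R_eqF Ω E hE σ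
  | app s t ihs iht =>
    intro I'
    obtain ⟨ds, hes, hrs⟩ := ihs I'
    obtain ⟨dt, het, hrt⟩ := iht I'
    refine ⟨(Mstr Ω E hE).ap ds dt, Eval.app hes het, fun θ hθ => ?_⟩
    rw [Ω.s2]
    exact hrs θ hθ (Ω.sub θ t) dt.1 (hrt θ hθ)
  | lam x σ0 s ih =>
    intro I'
    set g : Dom Ω E σ0 → _ := fun a =>
      Classical.choose (ih (updD (Mstr Ω E hE) I' x σ0 a)) with hg
    have hgspec : ∀ a : Dom Ω E σ0,
        Eval (Mstr Ω E hE) (updD (Mstr Ω E hE) I' x σ0 a) _ s (g a) ∧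
        ∀ θ, Compat Ω E θ (updD (Mstr Ω E hE) I' x σ0 a) → R Ω E (Ω.sub θ s) (g a).1 :=
      fun a => Classical.choose_spec (ih (updD (Mstr Ω E hE) I' x σ0 a))
    have hFval : ∀ θ, Compat Ω E θ I' →
        R Ω E (Ω.sub θ (Tm.lam x σ0 s)) (fun w => (g w).1) := by
      intro θ hθ t0 v hv
      have hc : Compat Ω E (updS θ x σ0 t0) (updD (Mstr Ω E hE) I' x σ0 ⟨v, t0, hv⟩) :=
        compat_upd Ω E hE hθ x σ0 t0 ⟨v, t0, hv⟩ hv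
      have hr := (hgspec ⟨v, t0, hv⟩).2 _ hc
      exact (R_nf_congr Ω E _ _ _ (Ω.s3 θ x σ0 s t0) _).mpr hr
    have hθ0 : Compat Ω E (fun n μ => some (Classical.choose (I' n μ).2)) I' :=
      fun n μ => by
        simpa [Option.getD, R] using Classical.choose_spec (I' n μ).2
    refine ⟨⟨fun w => (g w).1,
      Ω.sub (fun n μ => some (Classical.choose (I' n μ).2)) (Tm.lam x σ0 s),
      hFval _ hθ0⟩, ?_, fun θ hθ => hFval θ hθ⟩
    refine Eval.lam x σ0 s _ (fun a => ?_)
    have heta : (Mstr Ω E hE).ap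
        ⟨fun w => (g w).1, Ω.sub (fun n μ => some (Classical.choose (I' n μ).2))
          (Tm.lam x σ0 s), hFval _ hθ0⟩ a = g a := Subtype.ext rfl
    rw [heta]
    exact (hgspec a).1

/-- Every term evaluates (under the canonical assignment) to an `R`-value of itself. -/
lemma eval_R {σ : Ty} (s : Tm σ) :
    ∃ d : Dom Ω E σ, Eval (Mstr Ω E hE) (Mstr Ω E hE).I σ s d ∧ R Ω E s d.1 := by
  obtain ⟨d, he, hr⟩ := subst_total Ω E hE s (Mstr Ω E hE).I
  have hc : Compat Ω E (fun _ _ => none) (Mstr Ω E hE).I := by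
    intro n μ
    exact Classical.choose_spec (VVall Ω E hE μ n)
  have := hr _ hc
  exact ⟨d, he, (R_nf_congr Ω E σ _ _ (Ω.s4 s) _).mp this⟩

def Mint : Interp where
  toStruc := Mstr Ω E hE
  total := fun σ s => (eval_R Ω E hE s).elim fun d hd => ⟨d, hd.1⟩

lemma Msat (hnorm : ∀ s ∈ E, Ω.nf s = s) : Satisfies (Mint Ω E hE) E := by
  intro s hs
  obtain ⟨d, he, hr⟩ := eval_R Ω E hE s
  have hd1 : d.1 = true := by
    cases h : d.1 with
    | true => rfl
    | false =>
      have := (R_o Ω E s d.1).mp hr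
      rw [h] at this
      simp only [Bool.false_eq_true, if_false] at this
      exact absurd (show Ω.nf s ∈ E by rwa [hnorm s hs]) this
  have : d = (Mint Ω E hE).bo.symm true := by
    apply Subtype.ext
    rw [hd1]; rfl
  rw [← this]
  exact he

end
end ModelEx6
namespace ModelEx7
open ModelEx ModelEx2 ModelEx3 ModelEx4 ModelEx5 ModelEx6
open Classical

noncomputable section

variable (Ω : NormOp) (E : Set (Tm Ty.o)) (hE : Evident Ω E)

def dsParts : ∀ {σ : Ty}, Tm σ → Option ((μ : Ty) × Tm μ × Tm μ)
  | _, Tm.app Tm.neg (Tm.app (Tm.app (Tm.eq μ) u) t) => some ⟨μ, u, t⟩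
  | _, _ => none

lemma diseq_inj {σ : Ty} {u t u' t' : Tm σ} (h : Tm.Diseq u t = Tm.Diseq u' t') :
    u = u' ∧ t = t' := by
  have h2 : (some ⟨σ, u, t⟩ : Option ((μ : Ty) × Tm μ × Tm μ)) = some ⟨σ, u', t'⟩ :=
    congrArg dsParts h
  simp only [Option.some.injEq] at h2
  have h3 := eq_of_heq (Sigma.mk.inj_iff.mp h2).2
  exact ⟨congrArg Prod.fst h3, congrArg Prod.snd h3⟩

lemma disc_normal (hnorm : ∀ s ∈ E, Ω.nf s = s) {σ : Ty} (u : Tm σ)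
    (h : Discriminating E u) : Ω.nf u = u := by
  obtain ⟨t, ht | ht⟩ := h
  · have h0 := hnorm _ ht
    rw [nf_Diseq] at h0
    exact (diseq_inj h0).1
  · have h0 := hnorm _ ht
    rw [nf_Diseq] at h0
    exact (diseq_inj h0).2

lemma tot (hE : Evident Ω E) {σ : Ty} (s : Tm σ) : ∃ x : (sem Ω E σ).1, R Ω E s x :=
  (eval_R Ω E hE s).elim fun d hd => ⟨d.1, hd.2⟩

lemma diseq_refl (hE : Evident Ω E) {α : ℕ} (u : Tm (Ty.sort α)) (hu : Ω.nf u = u) :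
    Tm.Diseq u u ∉ E := by
  intro hc
  obtain ⟨x, hx⟩ := tot Ω E hE u
  exact D1all Ω E hE _ u u x hx hx (by rw [hu]; exact hc)

lemma disc_unique (hE : Evident Ω E) (hnorm : ∀ s ∈ E, Ω.nf s = s) (hC : CompleteBranch Ω E) {α : ℕ}
    {a b : Set (Tm (Ty.sort α))} (ha : IsDiscriminant E α a) (hb : IsDiscriminant E α b)
    {u : Tm (Ty.sort α)} (hua : u ∈ a) (hub : u ∈ b) : a = b := by
  have hnu : Ω.nf u = u := disc_normal Ω E hnorm u (ha.1 u hua)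
  have eqn_of : ∀ (c : Set (Tm (Ty.sort α))), IsDiscriminant E α c →
      ∀ s ∈ c, u ∈ c → Tm.Eqn s u ∈ E := by
    intro c hc s hs huc
    have hns : Ω.nf s = s := disc_normal Ω E hnorm s (hc.1 s hs)
    rcases hC (Tm.Eqn s u) (by rw [nf_Eqn, hns, hnu]) with h | h
    · exact h
    · exact absurd h (hc.2.1 s hs u huc)
  have core : ∀ s t : Tm (Ty.sort α), Ω.nf s = s → Ω.nf t = t →
      Tm.Eqn s u ∈ E → Tm.Eqn t u ∈ E → Tm.Diseq s t ∉ E := by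
    intro s t hns hnt hsu htu hdq
    rcases hE.con s u s t hsu hdq with ⟨c1, c2⟩ | ⟨c1, c2⟩
    · exact diseq_refl Ω E hE s hns c1
    · rcases hE.con t u u t htu c2 with ⟨d1, d2⟩ | ⟨d1, d2⟩
      · exact diseq_refl Ω E hE u hnu d2
      · exact diseq_refl Ω E hE t hnt d1
  have key : ∀ s ∈ a ∪ b, ∀ t ∈ a ∪ b, Tm.Diseq s t ∉ E := by
    rintro s (hs | hs) t (ht | ht)
    · exact ha.2.1 s hs t ht
    · exact core s t (disc_normal Ω E hnorm s (ha.1 s hs))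
        (disc_normal Ω E hnorm t (hb.1 t ht))
        (eqn_of a ha s hs hua) (eqn_of b hb t ht hub)
    · exact core s t (disc_normal Ω E hnorm s (hb.1 s hs))
        (disc_normal Ω E hnorm t (ha.1 t ht))
        (eqn_of b hb s hs hub) (eqn_of a ha t ht hua)
    · exact hb.2.1 s hs t ht
  have hdiscm : ∀ v ∈ a ∪ b, Discriminating E v := by
    rintro v (hv | hv)
    exacts [ha.1 v hv, hb.1 v hv]
  have e1 : a ∪ b = a := ha.2.2 _ Set.subset_union_left hdiscm key
  have e2 : a ∪ b = b := hb.2.2 _ Set.subset_union_right hdiscm key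
  exact e1.symm.trans e2

lemma uniqR (hE : Evident Ω E) (hnorm : ∀ s ∈ E, Ω.nf s = s) (hC : CompleteBranch Ω E) :
    ∀ (σ : Ty) (s : Tm σ) (x y : (sem Ω E σ).1), R Ω E s x → R Ω E s y → x = y := by
  intro σ
  induction σ with
  | base b =>
    cases b with
    | zero =>
      intro s x y hx hy
      have hx' := (R_o Ω E s x).mp hx
      have hy' := (R_o Ω E s y).mp hy
      rcases hC (Ω.nf s) (Ω.n1 s) with h | h <;> cases x <;> cases y <;> simp_all <;> rfl
    | succ α =>
      intro s x y hx hy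
      change Set (Tm (Ty.sort α)) at x y
      obtain ⟨hdx, hmx⟩ := (R_sort Ω E s x).mp hx
      obtain ⟨hdy, hmy⟩ := (R_sort Ω E s y).mp hy
      by_cases hd : Discriminating E (Ω.nf s)
      · exact disc_unique Ω E hE hnorm hC hdx hdy (hmx hd) (hmy hd)
      · by_cases hex : ∃ u : Tm (Ty.sort α), Discriminating E u
        · exfalso
          apply hd
          obtain ⟨u, hu⟩ := hex
          have hnu : Ω.nf u = u := disc_normal Ω E hnorm u hu
          rcases hC (Tm.Eqn (Ω.nf s) u) (by rw [nf_Eqn, Ω.n1, hnu]) with hq | hq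
          · obtain ⟨w, hw | hw⟩ := hu
            · rcases hE.con (Ω.nf s) u u w hq hw with ⟨c, _⟩ | ⟨c, _⟩ <;>
                exact ⟨_, Or.inl c⟩
            · rcases hE.con (Ω.nf s) u w u hq hw with ⟨c, _⟩ | ⟨c, _⟩ <;>
                exact ⟨_, Or.inl c⟩
          · exact ⟨u, Or.inl hq⟩
        · have hx0 : x = ∅ := Set.eq_empty_iff_forall_notMem.mpr
            fun v hv => hex ⟨v, hdx.1 v hv⟩
          have hy0 : y = ∅ := Set.eq_empty_iff_forall_notMem.mpr
            fun v hv => hex ⟨v, hdy.1 v hv⟩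
          rw [hx0, hy0]
  | arr σ1 τ ih1 ih2 =>
    intro s f g hf hg
    funext w
    obtain ⟨t, ht⟩ := w.2
    have h1 := hf t w.1 ht
    have h2 := hg t w.1 ht
    have hw : (⟨w.1, t, ht⟩ :
        {x : (sem Ω E σ1).1 // ∃ v : Tm σ1, (sem Ω E σ1).2 v x}) = w := Subtype.ext rfl
    rw [← hw]
    exact ih2 (Tm.app s t) _ _ h1 h2

lemma Msurj (hnorm : ∀ s ∈ E, Ω.nf s = s) (hC : CompleteBranch Ω E) :
    Surj (Mint Ω E hE) := by
  intro σ a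
  obtain ⟨t, ht⟩ := a.2
  obtain ⟨d, he, hr⟩ := eval_R Ω E hE t
  have : d = a := Subtype.ext (uniqR Ω E hE hnorm hC σ t d.1 a.1 hr ht)
  exact ⟨t, this ▸ he⟩

lemma discSet_finite (hfin : E.Finite) (α : ℕ) :
    {u : Tm (Ty.sort α) | Discriminating E u}.Finite := by
  have hsub : {u : Tm (Ty.sort α) | Discriminating E u} ⊆
      ⋃ d ∈ E, {u : Tm (Ty.sort α) |
        (∃ t, d = Tm.Diseq u t) ∨ (∃ t, d = Tm.Diseq t u)} := by
    rintro u ⟨t, ht | ht⟩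
    · exact Set.mem_biUnion ht (Or.inl ⟨t, rfl⟩)
    · exact Set.mem_biUnion ht (Or.inr ⟨t, rfl⟩)
  refine Set.Finite.subset (Set.Finite.biUnion hfin fun d _ => ?_) hsub
  have h1 : {u : Tm (Ty.sort α) | ∃ t, d = Tm.Diseq u t}.Subsingleton := by
    rintro u ⟨t, rfl⟩ u' ⟨t', h⟩
    exact (diseq_inj h).1
  have h2 : {u : Tm (Ty.sort α) | ∃ t, d = Tm.Diseq t u}.Subsingleton := by
    rintro u ⟨t, rfl⟩ u' ⟨t', h⟩
    exact (diseq_inj h).2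
  exact (h1.finite.union h2.finite)

lemma dom_finite (hfin : E.Finite) : ∀ σ : Ty, Finite (Dom Ω E σ) := by
  intro σ
  induction σ with
  | base b =>
    cases b with
    | zero =>
      exact Finite.of_injective (fun d : Dom Ω E Ty.o => (show Bool from d.1))
        fun a b h => Subtype.ext h
    | succ α =>
      have hfs : {t : Set (Tm (Ty.sort α)) |
          t ⊆ {u | Discriminating E u}}.Finite :=
        (discSet_finite E hfin α).finite_subsets
      have : Finite ↥{t : Set (Tm (Ty.sort α)) | t ⊆ {u | Discriminating E u}} :=
        hfs.to_subtype
      have hsubp : ∀ d : Dom Ω E (Ty.base (α + 1)),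
          (show Set (Tm (Ty.sort α)) from d.1) ⊆ {u | Discriminating E u} := by
        intro d
        obtain ⟨t, ht⟩ := d.2
        exact fun v hv => ((R_sort Ω E t d.1).mp ht).1.1 v hv
      exact Finite.of_injective (fun d : Dom Ω E (Ty.base (α + 1)) =>
        (⟨d.1, hsubp d⟩ : {t : Set (Tm (Ty.sort α)) | t ⊆ {u | Discriminating E u}}))
        fun a b h => Subtype.ext (congrArg
          (fun z : {t : Set (Tm (Ty.sort α)) | t ⊆ {u | Discriminating E u}} =>
            (z.1 : Set (Tm (Ty.sort α)))) h)
  | arr σ1 τ ih1 ih2 =>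
    exact Finite.of_injective
      (fun F : Dom Ω E (Ty.arr σ1 τ) => (fun a => apD Ω E F a : Dom Ω E σ1 → Dom Ω E τ))
      (fun F G h => by
        apply Subtype.ext
        funext w
        exact congrArg Subtype.val (congrFun h w))

end
end ModelEx7
/-- Model Existence: every evident branch is satisfiable; every complete
evident branch has a surjective model; every finite evident branch has a finite model. -/
theorem stmt11 (Ω : NormOp) (E : Set (Tm Ty.o)) (hE : Evident Ω E)
    (hnorm : ∀ s ∈ E, Ω.nf s = s) :
    (∃ M : Interp, Satisfies M E) ∧
    (CompleteBranch Ω E → ∃ M : Interp, Satisfies M E ∧ Surj M) ∧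
    (E.Finite → ∃ M : Interp, Satisfies M E ∧ ∀ σ : Ty, Finite (M.D σ)) := by
  refine ⟨⟨ModelEx6.Mint Ω E hE, ModelEx6.Msat Ω E hE hnorm⟩, ?_, ?_⟩
  · intro hC
    exact ⟨ModelEx6.Mint Ω E hE, ModelEx6.Msat Ω E hE hnorm,
      ModelEx7.Msurj Ω E hE hnorm hC⟩
  · intro hfin
    exact ⟨ModelEx6.Mint Ω E hE, ModelEx6.Msat Ω E hE hnorm,
      fun σ => ModelEx7.dom_finite Ω E hfin σ⟩
end

section
/- Extension Lemma: if Γ is an abstract consistency class and A ∈ Γ, then there exists an evident branch E with A ⊆ E; moreover if Γ is complete then E can be chosen to be a complete evident branch. -/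
section ExtensionAux

attribute [local instance] Classical.propDecidable

/-- Untyped term skeletons, used to prove countability of `Tm σ`. -/
private inductive PreTm : Type
  | var : ℕ → Ty → PreTm
  | neg : PreTm
  | eq : Ty → PreTm
  | app : Ty → PreTm → PreTm → PreTm
  | lam : ℕ → Ty → PreTm → PreTm

private def tyCode : Ty → ℕ
  | Ty.base n => Nat.pair 0 n
  | Ty.arr a b => Nat.pair 1 (Nat.pair (tyCode a) (tyCode b))

private theorem tyCode_inj : ∀ a b : Ty, tyCode a = tyCode b → a = b := by
  intro a
  induction a with
  | base n =>
      intro b h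
      cases b <;> simp [tyCode, Nat.pair_eq_pair] at h
      rw [h]
  | arr a1 a2 ih1 ih2 =>
      intro b h
      cases b <;> simp [tyCode, Nat.pair_eq_pair] at h
      rw [ih1 _ h.1, ih2 _ h.2]

private def ptCode : PreTm → ℕ
  | .var n σ => Nat.pair 0 (Nat.pair n (tyCode σ))
  | .neg => Nat.pair 1 0
  | .eq σ => Nat.pair 2 (tyCode σ)
  | .app σ s t => Nat.pair 3 (Nat.pair (tyCode σ) (Nat.pair (ptCode s) (ptCode t)))
  | .lam n σ s => Nat.pair 4 (Nat.pair n (Nat.pair (tyCode σ) (ptCode s)))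

private theorem ptCode_inj : ∀ a b : PreTm, ptCode a = ptCode b → a = b := by
  intro a
  induction a with
  | var n σ =>
      intro b h
      cases b <;> simp [ptCode, Nat.pair_eq_pair] at h
      rw [h.1, tyCode_inj _ _ h.2]
  | neg =>
      intro b h
      cases b <;> simp [ptCode, Nat.pair_eq_pair] at h
      rfl
  | eq σ =>
      intro b h
      cases b <;> simp [ptCode, Nat.pair_eq_pair] at h
      rw [tyCode_inj _ _ h]
  | app σ s t ihs iht =>
      intro b h
      cases b <;> simp [ptCode, Nat.pair_eq_pair] at h
      rw [tyCode_inj _ _ h.1, ihs _ h.2.1, iht _ h.2.2]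
  | lam n σ s ihs =>
      intro b h
      cases b <;> simp [ptCode, Nat.pair_eq_pair] at h
      rw [h.1, tyCode_inj _ _ h.2.1, ihs _ h.2.2]

private def erase : ∀ {σ : Ty}, Tm σ → PreTm
  | _, Tm.var n σ => PreTm.var n σ
  | _, Tm.neg => PreTm.neg
  | _, Tm.eq σ => PreTm.eq σ
  | _, Tm.app (σ := σ) s t => PreTm.app σ (erase s) (erase t)
  | _, Tm.lam n σ s => PreTm.lam n σ (erase s)

private theorem erase_inj : ∀ {σ : Ty} (s t : Tm σ), erase s = erase t → s = t := by
  intro σ s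
  induction s with
  | var n σ =>
      intro t h
      cases t with
      | var m τ => simp [erase] at h; rw [h]
      | neg => simp [erase] at h
      | eq τ => simp [erase] at h
      | app u v => simp [erase] at h
      | lam m τ u => simp [erase] at h
  | neg =>
      intro t h
      cases t with
      | var m τ => simp [erase] at h
      | neg => rfl
      | app u v => simp [erase] at h
      | lam m τ u => simp [erase] at h
  | eq σ =>
      intro t h
      cases t with
      | var m τ => simp [erase] at h
      | eq τ => rfl
      | app u v => simp [erase] at h
      | lam m τ u => simp [erase] at h
  | app s u ihs ihu =>
      intro t h
      cases t with
      | var m τ => simp [erase] at h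
      | neg => simp [erase] at h
      | eq τ => simp [erase] at h
      | app v w =>
          simp [erase] at h
          obtain ⟨h1, h2, h3⟩ := h
          subst h1
          rw [ihs _ h2, ihu _ h3]
      | lam m τ w => simp [erase] at h
  | lam n σ s ihs =>
      intro t h
      cases t with
      | var m τ => simp [erase] at h
      | neg => simp [erase] at h
      | eq τ => simp [erase] at h
      | app u v => simp [erase] at h
      | lam m τ u =>
          simp [erase] at h
          rw [h.1, ihs _ h.2]

private def tmCode {σ : Ty} (s : Tm σ) : ℕ := ptCode (erase s)

private theorem tmCode_inj {σ : Ty} (s t : Tm σ) (h : tmCode s = tmCode t) : s = t :=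
  erase_inj s t (ptCode_inj _ _ h)

private def a2Code : ∀ {σ ρ : Ty}, Args2 σ ρ → ℕ
  | _, _, Args2.nil => 0
  | _, _, Args2.cons s t p =>
      Nat.pair (tmCode s) (Nat.pair (tmCode t) (a2Code p)) + 1

private theorem a2Code_inj : ∀ {σ ρ : Ty} (p q : Args2 σ ρ), a2Code p = a2Code q → p = q := by
  intro σ ρ p
  induction p with
  | nil =>
      intro q h
      cases q with
      | nil => rfl
      | cons s t q => simp [a2Code] at h
  | cons s t p ih =>
      intro q h
      cases q with
      | nil => simp [a2Code] at h
      | cons s' t' q =>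
          simp [a2Code, Nat.pair_eq_pair] at h
          rw [tmCode_inj _ _ h.1, tmCode_inj _ _ h.2.1, ih _ h.2.2]

/-- The countably many "tasks" used in the fair construction of the evident extension. -/
private inductive XTask : Type
  | dn : Tm Ty.o → XTask
  | bq : Tm Ty.o → Tm Ty.o → XTask
  | be : Tm Ty.o → Tm Ty.o → XTask
  | fq : (σ τ : Ty) → Tm (Ty.arr σ τ) → Tm (Ty.arr σ τ) → Tm σ → XTask
  | fe : (σ τ : Ty) → Tm (Ty.arr σ τ) → Tm (Ty.arr σ τ) → XTask
  | mat : (σ : Ty) → ℕ → Args2 σ Ty.o → XTask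
  | dec : (σ : Ty) → (α : ℕ) → ℕ → Args2 σ (Ty.sort α) → XTask
  | con : (α : ℕ) → Tm (Ty.sort α) → Tm (Ty.sort α) → Tm (Ty.sort α) → Tm (Ty.sort α) → XTask
  | compl : Tm Ty.o → XTask

private def taskCode : XTask → ℕ
  | .dn s => Nat.pair 0 (tmCode s)
  | .bq s t => Nat.pair 1 (Nat.pair (tmCode s) (tmCode t))
  | .be s t => Nat.pair 2 (Nat.pair (tmCode s) (tmCode t))
  | .fq σ τ s t u => Nat.pair 3 (Nat.pair (tyCode σ) (Nat.pair (tyCode τ)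
      (Nat.pair (tmCode s) (Nat.pair (tmCode t) (tmCode u)))))
  | .fe σ τ s t => Nat.pair 4 (Nat.pair (tyCode σ) (Nat.pair (tyCode τ)
      (Nat.pair (tmCode s) (tmCode t))))
  | .mat σ x p => Nat.pair 5 (Nat.pair (tyCode σ) (Nat.pair x (a2Code p)))
  | .dec σ α x p => Nat.pair 6 (Nat.pair (tyCode σ) (Nat.pair α (Nat.pair x (a2Code p))))
  | .con α s t u v => Nat.pair 7 (Nat.pair α (Nat.pair (tmCode s) (Nat.pair (tmCode t)
      (Nat.pair (tmCode u) (tmCode v)))))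
  | .compl s => Nat.pair 8 (tmCode s)

private theorem taskCode_inj : Function.Injective taskCode := by
  intro a b h
  cases a <;> cases b <;> simp [taskCode, Nat.pair_eq_pair] at h
  case dn.dn => rw [tmCode_inj _ _ h]
  case bq.bq => rw [tmCode_inj _ _ h.1, tmCode_inj _ _ h.2]
  case be.be => rw [tmCode_inj _ _ h.1, tmCode_inj _ _ h.2]
  case fq.fq =>
      obtain ⟨h1, h2, h3, h4, h5⟩ := h
      obtain rfl := tyCode_inj _ _ h1
      obtain rfl := tyCode_inj _ _ h2
      rw [tmCode_inj _ _ h3, tmCode_inj _ _ h4, tmCode_inj _ _ h5]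
  case fe.fe =>
      obtain ⟨h1, h2, h3, h4⟩ := h
      obtain rfl := tyCode_inj _ _ h1
      obtain rfl := tyCode_inj _ _ h2
      rw [tmCode_inj _ _ h3, tmCode_inj _ _ h4]
  case mat.mat =>
      obtain ⟨h1, h2, h3⟩ := h
      obtain rfl := tyCode_inj _ _ h1
      rw [h2, a2Code_inj _ _ h3]
  case dec.dec =>
      obtain ⟨h1, h2, h3, h4⟩ := h
      obtain rfl := tyCode_inj _ _ h1
      obtain rfl := h2
      rw [h3, a2Code_inj _ _ h4]
  case con.con =>
      obtain ⟨h1, h2, h3, h4, h5⟩ := h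
      obtain rfl := h1
      rw [tmCode_inj _ _ h2, tmCode_inj _ _ h3, tmCode_inj _ _ h4, tmCode_inj _ _ h5]
  case compl.compl => rw [tmCode_inj _ _ h]

private instance : Countable XTask := ⟨⟨taskCode, taskCode_inj⟩⟩

private instance : Nonempty XTask := ⟨XTask.dn (Tm.var 0 Ty.o)⟩

private theorem exists_fair : ∃ f : ℕ → XTask, ∀ (t : XTask) (n : ℕ), ∃ k, n ≤ k ∧ f k = t := by
  obtain ⟨g, hg⟩ := exists_surjective_nat XTask
  refine ⟨fun n => g (Nat.unpair n).1, fun t n => ?_⟩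
  obtain ⟨k, hk⟩ := hg t
  exact ⟨Nat.pair k n, Nat.right_le_pair k n, by simp [Nat.unpair_pair, hk]⟩

section Chain

variable (Ω : NormOp) (Γ : Set (Set (Tm Ty.o))) (hΓ : ACC Ω Γ)
  (cfun : ∀ B : Set (Tm Ty.o), B ∈ Γ → Tm Ty.o → {C : Set (Tm Ty.o) // C ∈ Γ ∧ B ⊆ C})

private noncomputable def doTask : XTask → {B : Set (Tm Ty.o) // B ∈ Γ} → {B : Set (Tm Ty.o) // B ∈ Γ}
  | XTask.dn s, B =>
      if h : Tm.Not (Tm.Not s) ∈ B.1 then ⟨insert s B.1, hΓ.dn B.1 B.2 s h⟩ else B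
  | XTask.bq s t, B =>
      if h : Tm.Eqn s t ∈ B.1 then
        if h2 : insert s (insert t B.1) ∈ Γ then ⟨_, h2⟩
        else ⟨insert (Tm.Not s) (insert (Tm.Not t) B.1), (hΓ.bq B.1 B.2 s t h).resolve_left h2⟩
      else B
  | XTask.be s t, B =>
      if h : Tm.Diseq s t ∈ B.1 then
        if h2 : insert s (insert (Tm.Not t) B.1) ∈ Γ then ⟨_, h2⟩
        else ⟨insert (Tm.Not s) (insert t B.1), (hΓ.be B.1 B.2 s t h).resolve_left h2⟩
      else B
  | XTask.fq σ τ s t u, B =>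
      if h : Tm.Eqn s t ∈ B.1 ∧ Ω.nf u = u then
        ⟨insert (Tm.Eqn (Ω.nf (Tm.app s u)) (Ω.nf (Tm.app t u))) B.1, hΓ.fq B.1 B.2 s t h.1 u h.2⟩
      else B
  | XTask.fe σ τ s t, B =>
      if h : Tm.Diseq s t ∈ B.1 then
        ⟨insert (Tm.Diseq (Ω.nf (Tm.app s (Tm.var (hΓ.fe B.1 B.2 s t h).choose σ)))
                 (Ω.nf (Tm.app t (Tm.var (hΓ.fe B.1 B.2 s t h).choose σ)))) B.1,
         (hΓ.fe B.1 B.2 s t h).choose_spec⟩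
      else B
  | XTask.mat σ x p, B =>
      if h : applyArgs (Tm.var x σ) p.left ∈ B.1 ∧ Tm.Not (applyArgs (Tm.var x σ) p.right) ∈ B.1 then
        ⟨insert (hΓ.mat B.1 B.2 x p h.1 h.2).choose B.1, (hΓ.mat B.1 B.2 x p h.1 h.2).choose_spec.2⟩
      else B
  | XTask.dec σ α x p, B =>
      if h : Tm.Diseq (applyArgs (Tm.var x σ) p.left) (applyArgs (Tm.var x σ) p.right) ∈ B.1 then
        ⟨insert (hΓ.dec B.1 B.2 x p h).choose B.1, (hΓ.dec B.1 B.2 x p h).choose_spec.2⟩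
      else B
  | XTask.con α s t u v, B =>
      if h : Tm.Eqn s t ∈ B.1 ∧ Tm.Diseq u v ∈ B.1 then
        if h2 : insert (Tm.Diseq s u) (insert (Tm.Diseq t u) B.1) ∈ Γ then ⟨_, h2⟩
        else ⟨insert (Tm.Diseq s v) (insert (Tm.Diseq t v) B.1),
              (hΓ.con B.1 B.2 s t u v h.1 h.2).resolve_left h2⟩
      else B
  | XTask.compl s, B => ⟨(cfun B.1 B.2 s).1, (cfun B.1 B.2 s).2.1⟩

private theorem doTask_mono (t : XTask) (B : {B : Set (Tm Ty.o) // B ∈ Γ}) :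
    B.1 ⊆ (doTask Ω Γ hΓ cfun t B).1 := by
  have h2i : ∀ (s t : Tm Ty.o) (C : Set (Tm Ty.o)), C ⊆ insert s (insert t C) :=
    fun s t C => (Set.subset_insert _ _).trans (Set.subset_insert _ _)
  cases t with
  | dn s => simp only [doTask]; split; exacts [Set.subset_insert _ _, subset_rfl]
  | bq s t =>
      simp only [doTask]; split
      · split; exacts [h2i _ _ _, h2i _ _ _]
      · exact subset_rfl
  | be s t =>
      simp only [doTask]; split
      · split; exacts [h2i _ _ _, h2i _ _ _]
      · exact subset_rfl
  | fq σ τ s t u => simp only [doTask]; split; exacts [Set.subset_insert _ _, subset_rfl]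
  | fe σ τ s t => simp only [doTask]; split; exacts [Set.subset_insert _ _, subset_rfl]
  | mat σ x p => simp only [doTask]; split; exacts [Set.subset_insert _ _, subset_rfl]
  | dec σ α x p => simp only [doTask]; split; exacts [Set.subset_insert _ _, subset_rfl]
  | con α s t u v =>
      simp only [doTask]; split
      · split; exacts [h2i _ _ _, h2i _ _ _]
      · exact subset_rfl
  | compl s => exact (cfun _ _ _).2.2

private theorem spec_dn (B : {B : Set (Tm Ty.o) // B ∈ Γ}) (s : Tm Ty.o)
    (h : Tm.Not (Tm.Not s) ∈ B.1) : s ∈ (doTask Ω Γ hΓ cfun (XTask.dn s) B).1 := by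
  simp only [doTask, dif_pos h]
  exact Set.mem_insert _ _

private theorem spec_bq (B : {B : Set (Tm Ty.o) // B ∈ Γ}) (s t : Tm Ty.o)
    (h : Tm.Eqn s t ∈ B.1) :
    (s ∈ (doTask Ω Γ hΓ cfun (XTask.bq s t) B).1 ∧ t ∈ (doTask Ω Γ hΓ cfun (XTask.bq s t) B).1) ∨
    (Tm.Not s ∈ (doTask Ω Γ hΓ cfun (XTask.bq s t) B).1 ∧
      Tm.Not t ∈ (doTask Ω Γ hΓ cfun (XTask.bq s t) B).1) := by
  simp only [doTask, dif_pos h]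
  split
  · exact Or.inl ⟨Set.mem_insert _ _, Set.mem_insert_of_mem _ (Set.mem_insert _ _)⟩
  · exact Or.inr ⟨Set.mem_insert _ _, Set.mem_insert_of_mem _ (Set.mem_insert _ _)⟩

private theorem spec_be (B : {B : Set (Tm Ty.o) // B ∈ Γ}) (s t : Tm Ty.o)
    (h : Tm.Diseq s t ∈ B.1) :
    (s ∈ (doTask Ω Γ hΓ cfun (XTask.be s t) B).1 ∧
      Tm.Not t ∈ (doTask Ω Γ hΓ cfun (XTask.be s t) B).1) ∨
    (Tm.Not s ∈ (doTask Ω Γ hΓ cfun (XTask.be s t) B).1 ∧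
      t ∈ (doTask Ω Γ hΓ cfun (XTask.be s t) B).1) := by
  simp only [doTask, dif_pos h]
  split
  · exact Or.inl ⟨Set.mem_insert _ _, Set.mem_insert_of_mem _ (Set.mem_insert _ _)⟩
  · exact Or.inr ⟨Set.mem_insert _ _, Set.mem_insert_of_mem _ (Set.mem_insert _ _)⟩

private theorem spec_fq (B : {B : Set (Tm Ty.o) // B ∈ Γ}) {σ τ : Ty}
    (s t : Tm (Ty.arr σ τ)) (u : Tm σ) (h : Tm.Eqn s t ∈ B.1) (hu : Ω.nf u = u) :
    Tm.Eqn (Ω.nf (Tm.app s u)) (Ω.nf (Tm.app t u)) ∈ (doTask Ω Γ hΓ cfun (XTask.fq σ τ s t u) B).1 := by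
  simp only [doTask, dif_pos (And.intro h hu)]
  exact Set.mem_insert _ _

private theorem spec_fe (B : {B : Set (Tm Ty.o) // B ∈ Γ}) {σ τ : Ty}
    (s t : Tm (Ty.arr σ τ)) (h : Tm.Diseq s t ∈ B.1) :
    ∃ x : ℕ, Tm.Diseq (Ω.nf (Tm.app s (Tm.var x σ))) (Ω.nf (Tm.app t (Tm.var x σ))) ∈
      (doTask Ω Γ hΓ cfun (XTask.fe σ τ s t) B).1 := by
  simp only [doTask, dif_pos h]
  exact ⟨_, Set.mem_insert _ _⟩

private theorem spec_mat (B : {B : Set (Tm Ty.o) // B ∈ Γ}) {σ : Ty} (x : ℕ) (p : Args2 σ Ty.o)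
    (h1 : applyArgs (Tm.var x σ) p.left ∈ B.1)
    (h2 : Tm.Not (applyArgs (Tm.var x σ) p.right) ∈ B.1) :
    ∃ d ∈ p.diseqs, d ∈ (doTask Ω Γ hΓ cfun (XTask.mat σ x p) B).1 := by
  simp only [doTask, dif_pos (And.intro h1 h2)]
  exact ⟨_, (hΓ.mat B.1 B.2 x p h1 h2).choose_spec.1, Set.mem_insert _ _⟩

private theorem spec_dec (B : {B : Set (Tm Ty.o) // B ∈ Γ}) {σ : Ty} {α : ℕ} (x : ℕ)
    (p : Args2 σ (Ty.sort α))
    (h : Tm.Diseq (applyArgs (Tm.var x σ) p.left) (applyArgs (Tm.var x σ) p.right) ∈ B.1) :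
    ∃ d ∈ p.diseqs, d ∈ (doTask Ω Γ hΓ cfun (XTask.dec σ α x p) B).1 := by
  simp only [doTask, dif_pos h]
  exact ⟨_, (hΓ.dec B.1 B.2 x p h).choose_spec.1, Set.mem_insert _ _⟩

private theorem spec_con (B : {B : Set (Tm Ty.o) // B ∈ Γ}) {α : ℕ}
    (s t u v : Tm (Ty.sort α)) (h1 : Tm.Eqn s t ∈ B.1) (h2 : Tm.Diseq u v ∈ B.1) :
    (Tm.Diseq s u ∈ (doTask Ω Γ hΓ cfun (XTask.con α s t u v) B).1 ∧
      Tm.Diseq t u ∈ (doTask Ω Γ hΓ cfun (XTask.con α s t u v) B).1) ∨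
    (Tm.Diseq s v ∈ (doTask Ω Γ hΓ cfun (XTask.con α s t u v) B).1 ∧
      Tm.Diseq t v ∈ (doTask Ω Γ hΓ cfun (XTask.con α s t u v) B).1) := by
  simp only [doTask, dif_pos (And.intro h1 h2)]
  split
  · exact Or.inl ⟨Set.mem_insert _ _, Set.mem_insert_of_mem _ (Set.mem_insert _ _)⟩
  · exact Or.inr ⟨Set.mem_insert _ _, Set.mem_insert_of_mem _ (Set.mem_insert _ _)⟩

private theorem spec_compl (B : {B : Set (Tm Ty.o) // B ∈ Γ}) (s : Tm Ty.o)
    (hcspec : ∀ (C : Set (Tm Ty.o)) (hC : C ∈ Γ), Ω.nf s = s →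
      s ∈ (cfun C hC s).1 ∨ Tm.Not s ∈ (cfun C hC s).1) (hs : Ω.nf s = s) :
    s ∈ (doTask Ω Γ hΓ cfun (XTask.compl s) B).1 ∨
    Tm.Not s ∈ (doTask Ω Γ hΓ cfun (XTask.compl s) B).1 := by
  simp only [doTask]
  exact hcspec B.1 B.2 hs

private noncomputable def chain (f : ℕ → XTask) (A : Set (Tm Ty.o)) (hA : A ∈ Γ) :
    ℕ → {B : Set (Tm Ty.o) // B ∈ Γ}
  | 0 => ⟨A, hA⟩
  | n + 1 => doTask Ω Γ hΓ cfun (f n) (chain f A hA n)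

private theorem chain_mono (f : ℕ → XTask) (A : Set (Tm Ty.o)) (hA : A ∈ Γ) {m n : ℕ}
    (h : m ≤ n) : (chain Ω Γ hΓ cfun f A hA m).1 ⊆ (chain Ω Γ hΓ cfun f A hA n).1 := by
  induction n with
  | zero => rw [Nat.le_zero.mp h]
  | succ n ih =>
      rcases Nat.lt_or_ge m (n + 1) with h' | h'
      · exact (ih (Nat.lt_succ_iff.mp h')).trans
          (doTask_mono Ω Γ hΓ cfun (f n) (chain Ω Γ hΓ cfun f A hA n))
      · rw [Nat.le_antisymm h h']

private theorem chain_succ (f : ℕ → XTask) (A : Set (Tm Ty.o)) (hA : A ∈ Γ) (n : ℕ) :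
    chain Ω Γ hΓ cfun f A hA (n + 1) = doTask Ω Γ hΓ cfun (f n) (chain Ω Γ hΓ cfun f A hA n) :=
  rfl

private theorem evident_lim (f : ℕ → XTask) (hf : ∀ (t : XTask) (n : ℕ), ∃ k, n ≤ k ∧ f k = t)
    (A : Set (Tm Ty.o)) (hA : A ∈ Γ) :
    Evident Ω (⋃ n, (chain Ω Γ hΓ cfun f A hA n).1) := by
  set c := chain Ω Γ hΓ cfun f A hA with hc
  set E := ⋃ n, (c n).1 with hE
  have hmem : ∀ s : Tm Ty.o, s ∈ E ↔ ∃ n, s ∈ (c n).1 := fun s => Set.mem_iUnion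
  have hup : ∀ n, (c n).1 ⊆ E := fun n s hs => (hmem s).mpr ⟨n, hs⟩
  -- for any task and any formula set in `c n`, find a stage where the task is run
  have key : ∀ (t : XTask) (n : ℕ), ∃ k, n ≤ k ∧ c (k + 1) = doTask Ω Γ hΓ cfun t (c k) := by
    intro t n
    obtain ⟨k, hk, hfk⟩ := hf t n
    exact ⟨k, hk, by rw [hc, chain_succ, hfk]⟩
  constructor
  · -- dn
    intro s hs
    obtain ⟨n, hn⟩ := (hmem _).mp hs
    obtain ⟨k, hk, hek⟩ := key (XTask.dn s) n
    have h1 : Tm.Not (Tm.Not s) ∈ (c k).1 := chain_mono Ω Γ hΓ cfun f A hA hk hn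
    have := spec_dn Ω Γ hΓ cfun (c k) s h1
    rw [← hek] at this
    exact hup _ this
  · -- bq
    intro s t hst
    obtain ⟨n, hn⟩ := (hmem _).mp hst
    obtain ⟨k, hk, hek⟩ := key (XTask.bq s t) n
    have h1 : Tm.Eqn s t ∈ (c k).1 := chain_mono Ω Γ hΓ cfun f A hA hk hn
    have := spec_bq Ω Γ hΓ cfun (c k) s t h1
    rw [← hek] at this
    rcases this with ⟨ha, hb⟩ | ⟨ha, hb⟩
    · exact Or.inl ⟨hup _ ha, hup _ hb⟩
    · exact Or.inr ⟨hup _ ha, hup _ hb⟩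
  · -- be
    intro s t hst
    obtain ⟨n, hn⟩ := (hmem _).mp hst
    obtain ⟨k, hk, hek⟩ := key (XTask.be s t) n
    have h1 : Tm.Diseq s t ∈ (c k).1 := chain_mono Ω Γ hΓ cfun f A hA hk hn
    have := spec_be Ω Γ hΓ cfun (c k) s t h1
    rw [← hek] at this
    rcases this with ⟨ha, hb⟩ | ⟨ha, hb⟩
    · exact Or.inl ⟨hup _ ha, hup _ hb⟩
    · exact Or.inr ⟨hup _ ha, hup _ hb⟩
  · -- fq
    intro σ τ s t hst u hu
    obtain ⟨n, hn⟩ := (hmem _).mp hst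
    obtain ⟨k, hk, hek⟩ := key (XTask.fq σ τ s t u) n
    have h1 : Tm.Eqn s t ∈ (c k).1 := chain_mono Ω Γ hΓ cfun f A hA hk hn
    have := spec_fq Ω Γ hΓ cfun (c k) s t u h1 hu
    rw [← hek] at this
    exact hup _ this
  · -- fe
    intro σ τ s t hst
    obtain ⟨n, hn⟩ := (hmem _).mp hst
    obtain ⟨k, hk, hek⟩ := key (XTask.fe σ τ s t) n
    have h1 : Tm.Diseq s t ∈ (c k).1 := chain_mono Ω Γ hΓ cfun f A hA hk hn
    obtain ⟨x, hx⟩ := spec_fe Ω Γ hΓ cfun (c k) s t h1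
    rw [← hek] at hx
    exact ⟨x, hup _ hx⟩
  · -- mat
    intro σ x p hl hr
    obtain ⟨n1, hn1⟩ := (hmem _).mp hl
    obtain ⟨n2, hn2⟩ := (hmem _).mp hr
    obtain ⟨k, hk, hek⟩ := key (XTask.mat σ x p) (max n1 n2)
    have h1 : applyArgs (Tm.var x σ) p.left ∈ (c k).1 :=
      chain_mono Ω Γ hΓ cfun f A hA ((Nat.le_max_left n1 n2).trans hk) hn1
    have h2 : Tm.Not (applyArgs (Tm.var x σ) p.right) ∈ (c k).1 :=
      chain_mono Ω Γ hΓ cfun f A hA ((Nat.le_max_right n1 n2).trans hk) hn2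
    obtain ⟨d, hd1, hd2⟩ := spec_mat Ω Γ hΓ cfun (c k) x p h1 h2
    rw [← hek] at hd2
    exact ⟨d, hd1, hup _ hd2⟩
  · -- dec
    intro σ α x p hd
    obtain ⟨n, hn⟩ := (hmem _).mp hd
    obtain ⟨k, hk, hek⟩ := key (XTask.dec σ α x p) n
    have h1 := chain_mono Ω Γ hΓ cfun f A hA hk hn
    obtain ⟨d, hd1, hd2⟩ := spec_dec Ω Γ hΓ cfun (c k) x p h1
    rw [← hek] at hd2
    exact ⟨d, hd1, hup _ hd2⟩
  · -- con
    intro α s t u v he hd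
    obtain ⟨n1, hn1⟩ := (hmem _).mp he
    obtain ⟨n2, hn2⟩ := (hmem _).mp hd
    obtain ⟨k, hk, hek⟩ := key (XTask.con α s t u v) (max n1 n2)
    have h1 : Tm.Eqn s t ∈ (c k).1 :=
      chain_mono Ω Γ hΓ cfun f A hA ((Nat.le_max_left n1 n2).trans hk) hn1
    have h2 : Tm.Diseq u v ∈ (c k).1 :=
      chain_mono Ω Γ hΓ cfun f A hA ((Nat.le_max_right n1 n2).trans hk) hn2
    have := spec_con Ω Γ hΓ cfun (c k) s t u v h1 h2
    rw [← hek] at this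
    rcases this with ⟨ha, hb⟩ | ⟨ha, hb⟩
    · exact Or.inl ⟨hup _ ha, hup _ hb⟩
    · exact Or.inr ⟨hup _ ha, hup _ hb⟩

private theorem complete_lim (f : ℕ → XTask) (hf : ∀ (t : XTask) (n : ℕ), ∃ k, n ≤ k ∧ f k = t)
    (A : Set (Tm Ty.o)) (hA : A ∈ Γ)
    (hcspec : ∀ (s : Tm Ty.o) (C : Set (Tm Ty.o)) (hC : C ∈ Γ), Ω.nf s = s →
      s ∈ (cfun C hC s).1 ∨ Tm.Not s ∈ (cfun C hC s).1) :
    CompleteBranch Ω (⋃ n, (chain Ω Γ hΓ cfun f A hA n).1) := by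
  intro s hs
  obtain ⟨k, _, hfk⟩ := hf (XTask.compl s) 0
  have hek : chain Ω Γ hΓ cfun f A hA (k + 1) =
      doTask Ω Γ hΓ cfun (XTask.compl s) (chain Ω Γ hΓ cfun f A hA k) := by
    rw [chain_succ, hfk]
  have := spec_compl Ω Γ hΓ cfun (chain Ω Γ hΓ cfun f A hA k) s
    (fun C hC h => hcspec s C hC h) hs
  rw [← hek] at this
  rcases this with h | h
  · exact Or.inl (Set.mem_iUnion.mpr ⟨k + 1, h⟩)
  · exact Or.inr (Set.mem_iUnion.mpr ⟨k + 1, h⟩)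

end Chain

end ExtensionAux
/-- Extension Lemma: every member of an abstract consistency class extends to
an evident branch; if the class is complete, to a complete evident branch. -/
theorem stmt12 (Ω : NormOp) (Γ : Set (Set (Tm Ty.o))) (hΓ : ACC Ω Γ)
    (hnorm : ∀ A ∈ Γ, ∀ s ∈ A, Ω.nf s = s)
    (A : Set (Tm Ty.o)) (hA : A ∈ Γ) :
    (∃ E : Set (Tm Ty.o), A ⊆ E ∧ Evident Ω E) ∧
    (CompleteACC Ω Γ → ∃ E : Set (Tm Ty.o), A ⊆ E ∧ Evident Ω E ∧ CompleteBranch Ω E) := by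
  clear hnorm
  constructor
  · obtain ⟨f, hf⟩ := exists_fair
    refine ⟨⋃ n, (chain Ω Γ hΓ (fun B hB _ => ⟨B, hB, subset_rfl⟩) f A hA n).1,
      fun s hs => Set.mem_iUnion.mpr ⟨0, hs⟩, ?_⟩
    exact evident_lim Ω Γ hΓ _ f hf A hA
  · intro hcomp
    obtain ⟨f, hf⟩ := exists_fair
    classical
    set cfun : ∀ B : Set (Tm Ty.o), B ∈ Γ → Tm Ty.o → {C : Set (Tm Ty.o) // C ∈ Γ ∧ B ⊆ C} :=
      fun B hB s =>
        if h : Ω.nf s = s then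
          if h2 : insert s B ∈ Γ then ⟨insert s B, h2, Set.subset_insert _ _⟩
          else ⟨insert (Tm.Not s) B, (hcomp B hB s h).resolve_left h2, Set.subset_insert _ _⟩
        else ⟨B, hB, subset_rfl⟩ with hcfun
    refine ⟨⋃ n, (chain Ω Γ hΓ cfun f A hA n).1,
      fun s hs => Set.mem_iUnion.mpr ⟨0, hs⟩,
      evident_lim Ω Γ hΓ cfun f hf A hA, ?_⟩
    refine complete_lim Ω Γ hΓ cfun f hf A hA ?_
    intro s C hC h
    rw [hcfun]
    simp only [dif_pos h]
    split
    · exact Or.inl (Set.mem_insert _ _)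
    · exact Or.inr (Set.mem_insert _ _)
end
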